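/- arXiv:1304.0053 — 5 statements merged into one kernel-verified Lean document; each statement's English description precedes it below -/
import Mathlib

section
/- Let the Wang B machine W_N encode a non-erasing Turing machine N as in Theorem 1, with Turing tape symbols encoded by 0 ↦ 10 and 1 ↦ 11 on the Wang tape, and an encoded configuration placing the Wang head on the left symbol of the encoded read symbol with instruction pointer 13i for current state q_i. If N in state q_i reading symbol σ applies the transition rule (q_i, σ, σ', D, q_j) to reach a new configuration, then W_N, started from the encoding of the first configuration, reaches the encoding of the second configuration in at most 8 steps. -/
inductive WInstr : Type
  | L : WInstr
  | R : WInstr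
  | M : WInstr
  | J : ℕ → WInstr
  deriving DecidableEq

/-- A configuration of a Wang B machine: instruction pointer, head position, tape. -/
structure WCfg : Type where
  ip : ℕ
  pos : ℤ
  tape : ℤ → Bool

/-- One step of a Wang B machine with program `P`.  If the instruction pointer has
passed beyond the last instruction the machine has halted and the step does nothing. -/
def wStep (P : List WInstr) (c : WCfg) : WCfg :=
  match P[c.ip]? with
  | none => c
  | some WInstr.L => ⟨c.ip + 1, c.pos - 1, c.tape⟩
  | some WInstr.R => ⟨c.ip + 1, c.pos + 1, c.tape⟩
  | some WInstr.M => ⟨c.ip + 1, c.pos, Function.update c.tape c.pos true⟩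
  | some (WInstr.J x) =>
      if c.tape c.pos then ⟨x, c.pos, c.tape⟩ else ⟨c.ip + 1, c.pos, c.tape⟩

/-- A configuration of a single-tape binary Turing machine (states are naturals). -/
structure TMCfg : Type where
  q : ℕ
  pos : ℤ
  tape : ℤ → Bool

/-- One step of the binary Turing machine with transition function `f`;
`f q r = some (w, d, q')` means: in state `q` reading `r`, write `w`, move right
if `d = true` (left if `d = false`), and enter state `q'`.  `f q r = none` means
the machine is halted. -/
def tmStep (f : ℕ → Bool → Option (Bool × Bool × ℕ)) (c : TMCfg) : TMCfg :=
  match f c.q (c.tape c.pos) with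
  | none => c
  | some (w, d, q') =>
      ⟨q', if d then c.pos + 1 else c.pos - 1, Function.update c.tape c.pos w⟩

/-- A binary Turing machine is non-erasing if no rule overwrites 1 with 0. -/
def NonErasing (f : ℕ → Bool → Option (Bool × Bool × ℕ)) : Prop :=
  ∀ q d q', f q true ≠ some (false, d, q')

/-- The machine is halted in configuration `c`. -/
def TMHalted (f : ℕ → Bool → Option (Bool × Bool × ℕ)) (c : TMCfg) : Prop :=
  f c.q (c.tape c.pos) = none

/-- Equation (2): the instruction sequence `⟨TR_{q_i,0}⟩` encoding the transition rule
for reading 0 (direction `true` is right, `false` is left). -/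
def encTR0 (r : Option (Bool × Bool × ℕ)) : List WInstr :=
  match r with
  | some (false, true, j)  => [WInstr.R, WInstr.M, WInstr.M, WInstr.M, WInstr.M, WInstr.J (13 * j)]
  | some (false, false, j) => [WInstr.L, WInstr.L, WInstr.L, WInstr.M, WInstr.M, WInstr.J (13 * j)]
  | some (true, true, j)   => [WInstr.M, WInstr.R, WInstr.M, WInstr.M, WInstr.M, WInstr.J (13 * j)]
  | some (true, false, j)  => [WInstr.M, WInstr.L, WInstr.L, WInstr.L, WInstr.M, WInstr.J (13 * j)]
  | none => [WInstr.M, WInstr.M, WInstr.M, WInstr.M, WInstr.M, WInstr.M]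

/-- Equation (3): the instruction sequence `⟨TR_{q_i,1}⟩` encoding the transition rule
for reading 1 (non-erasing, so the written symbol is again 1). -/
def encTR1 (r : Option (Bool × Bool × ℕ)) : List WInstr :=
  match r with
  | some (_, true, j)  => [WInstr.R, WInstr.M, WInstr.M, WInstr.M, WInstr.J (13 * j)]
  | some (_, false, j) => [WInstr.L, WInstr.L, WInstr.L, WInstr.M, WInstr.J (13 * j)]
  | none => [WInstr.M, WInstr.M, WInstr.M, WInstr.M, WInstr.M]

/-- Equation (1): the Wang B machine `W_N` encoding the non-erasing Turing machine
with `m` states (halt state `m - 1`) and transition function `f`. -/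
def wangOf (m : ℕ) (f : ℕ → Bool → Option (Bool × Bool × ℕ)) : List WInstr :=
  ((List.range (m - 1)).map (fun i =>
    [WInstr.R, WInstr.J (13 * i + 8)] ++ encTR0 (f i false) ++ encTR1 (f i true))).flatten
    ++ [WInstr.M]

/-- The Wang tape `w` encodes the Turing tape `t`: Turing cell `k` is represented by the
pair of Wang cells `2k, 2k+1`, holding `10` if `t k = 0` and `11` if `t k = 1`;
still-blank pairs `00` (converted on demand during the simulation) may only represent 0. -/
def EncTape (t w : ℤ → Bool) : Prop :=
  ∀ k : ℤ, (w (2 * k) = true ∧ w (2 * k + 1) = t k) ∨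
    (w (2 * k) = false ∧ w (2 * k + 1) = false ∧ t k = false)

/-- The Wang configuration `wc` encodes the Turing configuration `c`: instruction pointer
`13 i` for current state `q_i`, head on the left symbol of the encoded read symbol
(which must already be marked), tape encoded as in `EncTape`. -/
def Encodes (wc : WCfg) (c : TMCfg) : Prop :=
  wc.ip = 13 * c.q ∧ wc.pos = 2 * c.pos ∧ wc.tape (2 * c.pos) = true ∧
    EncTape c.tape wc.tape


def blkOf (f : ℕ → Bool → Option (Bool × Bool × ℕ)) (i : ℕ) : List WInstr :=
  [WInstr.R, WInstr.J (13 * i + 8)] ++ encTR0 (f i false) ++ encTR1 (f i true)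

lemma encTR0_length (r : Option (Bool × Bool × ℕ)) : (encTR0 r).length = 6 := by
  rcases r with _ | ⟨a, b, j⟩; · rfl
  cases a <;> cases b <;> rfl

lemma encTR1_length (r : Option (Bool × Bool × ℕ)) : (encTR1 r).length = 5 := by
  rcases r with _ | ⟨a, b, j⟩; · rfl
  cases a <;> cases b <;> rfl

lemma blkOf_length (f : ℕ → Bool → Option (Bool × Bool × ℕ)) (i : ℕ) :
    (blkOf f i).length = 13 := by
  simp [blkOf, encTR0_length, encTR1_length]

lemma join_blk_length (f : ℕ → Bool → Option (Bool × Bool × ℕ)) (n : ℕ) :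
    (((List.range n).map (blkOf f)).flatten).length = 13 * n := by
  induction n with
  | zero => rfl
  | succ n ih =>
    rw [List.range_succ, List.map_append]
    simp only [List.flatten_append, List.length_append, ih]
    simp [blkOf_length]; ring

lemma join_blk_get (f : ℕ → Bool → Option (Bool × Bool × ℕ)) (n i k : ℕ)
    (hi : i < n) (hk : k < 13) :
    (((List.range n).map (blkOf f)).flatten)[13 * i + k]? = (blkOf f i)[k]? := by
  induction n with
  | zero => omega
  | succ n ih =>
    rw [List.range_succ, List.map_append]
    simp only [List.flatten_append]
    rcases Nat.lt_succ_iff_lt_or_eq.mp hi with h | h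
    · rw [List.getElem?_append_left (by rw [join_blk_length]; omega)]
      exact ih h
    · subst h
      rw [List.getElem?_append_right (by rw [join_blk_length]; omega)]
      rw [join_blk_length]
      simp only [List.map_cons, List.map_nil, List.flatten_cons, List.flatten_nil,
        List.append_nil]
      congr 1
      omega

lemma wang_get (m : ℕ) (f : ℕ → Bool → Option (Bool × Bool × ℕ)) (i k : ℕ)
    (hi : i < m - 1) (hk : k < 13) :
    (wangOf m f)[13 * i + k]? = (blkOf f i)[k]? := by
  have h : wangOf m f = ((List.range (m - 1)).map (blkOf f)).flatten ++ [WInstr.M] := rfl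
  rw [h, List.getElem?_append_left (by rw [join_blk_length]; omega)]
  exact join_blk_get f (m - 1) i k hi hk

lemma encA {t w : ℤ → Bool} (h : EncTape t w) (a x : ℤ) (hx : x = 2 * a) :
    EncTape t (Function.update w x true) := by
  subst hx
  intro k
  by_cases hk : k = a
  · subst hk
    left
    refine ⟨Function.update_self _ _ _, ?_⟩
    rw [Function.update_of_ne (by omega)]
    rcases h k with ⟨_, h2⟩ | ⟨_, h2, h3⟩
    · exact h2
    · rw [h2, h3]
  · rw [Function.update_of_ne (by omega), Function.update_of_ne (by omega)]
    exact h k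

lemma encB {t w : ℤ → Bool} (h : EncTape t w) (a x : ℤ) (hx : x = 2 * a + 1)
    (ha : w (2 * a) = true) :
    EncTape (Function.update t a true) (Function.update w x true) := by
  subst hx
  intro k
  by_cases hk : k = a
  · subst hk
    left
    rw [Function.update_of_ne (by omega), Function.update_self,
      Function.update_self]
    exact ⟨ha, rfl⟩
  · rw [Function.update_of_ne (by omega), Function.update_of_ne (by omega),
      Function.update_of_ne hk]
    exact h k


lemma blkOf_get_hi (f : ℕ → Bool → Option (Bool × Bool × ℕ)) (i k : ℕ) :
    (blkOf f i)[8 + k]? = (encTR1 (f i true))[k]? := by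
  rw [blkOf,
    List.getElem?_append_right (by simp [encTR0_length])]
  congr 1
  simp [encTR0_length]

lemma stepR {P : List WInstr} {ip : ℕ} {pos : ℤ} {w : ℤ → Bool} {i : ℕ}
    (h : P[ip]? = some WInstr.R) (hi : i = ip + 1) :
    wStep P ⟨ip, pos, w⟩ = ⟨i, pos + 1, w⟩ := by
  subst hi; simp [wStep, h]

lemma stepL {P : List WInstr} {ip : ℕ} {pos : ℤ} {w : ℤ → Bool} {i : ℕ}
    (h : P[ip]? = some WInstr.L) (hi : i = ip + 1) :
    wStep P ⟨ip, pos, w⟩ = ⟨i, pos - 1, w⟩ := by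
  subst hi; simp [wStep, h]

lemma stepM {P : List WInstr} {ip : ℕ} {pos : ℤ} {w : ℤ → Bool} {i : ℕ}
    (h : P[ip]? = some WInstr.M) (hi : i = ip + 1) :
    wStep P ⟨ip, pos, w⟩ = ⟨i, pos, Function.update w pos true⟩ := by
  subst hi; simp [wStep, h]

lemma stepJt {P : List WInstr} {ip x : ℕ} {pos : ℤ} {w : ℤ → Bool}
    (h : P[ip]? = some (WInstr.J x)) (hw : w pos = true) :
    wStep P ⟨ip, pos, w⟩ = ⟨x, pos, w⟩ := by
  simp [wStep, h, hw]

lemma stepJf {P : List WInstr} {ip x : ℕ} {pos : ℤ} {w : ℤ → Bool} {i : ℕ}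
    (h : P[ip]? = some (WInstr.J x)) (hw : w pos = false) (hi : i = ip + 1) :
    wStep P ⟨ip, pos, w⟩ = ⟨i, pos, w⟩ := by
  subst hi; simp [wStep, h, hw]

/-- If the non-erasing machine `N` in state `q_i` reading `σ` applies the rule
`(q_i, σ, σ', D, q_j)`, then the Wang B machine `W_N`, started from the encoding of the
configuration, reaches the encoding of the successor configuration in at most 8 steps. -/
theorem stmt5 (m : ℕ) (f : ℕ → Bool → Option (Bool × Bool × ℕ)) (hf : NonErasing f)
    (c : TMCfg) (hq : c.q < m - 1) (σ' D : Bool) (j : ℕ)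
    (hr : f c.q (c.tape c.pos) = some (σ', D, j))
    (wc : WCfg) (henc : Encodes wc c) :
    ∃ s ≤ 8, Encodes ((wStep (wangOf m f))^[s] wc) (tmStep f c) := by
  obtain ⟨ip, pos, w⟩ := wc
  obtain ⟨hip, hpos, hmk, htape⟩ := henc
  simp only at hip hpos hmk htape
  subst hip; subst hpos
  set P := wangOf m f with hPdef
  have hPk : ∀ k : ℕ, k < 13 → P[13 * c.q + k]? = (blkOf f c.q)[k]? :=
    fun k hk => wang_get m f c.q k hq hk
  have hHi : ∀ k : ℕ, k < 5 →
      P[13 * c.q + (8 + k)]? = (encTR1 (f c.q true))[k]? := fun k hk => by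
    rw [hPk (8 + k) (by omega), blkOf_get_hi]
  have hw1 : w (2 * c.pos + 1) = c.tape c.pos := by
    rcases htape c.pos with ⟨_, h2⟩ | ⟨h1, _, _⟩
    · exact h2
    · rw [hmk] at h1; exact absurd h1 (by simp)
  have h0 : P[13 * c.q]? = some WInstr.R := by
    simpa [blkOf] using hPk 0 (by norm_num)
  have h1 : P[13 * c.q + 1]? = some (WInstr.J (13 * c.q + 8)) := by
    simpa [blkOf] using hPk 1 (by norm_num)
  have iter8 : ∀ x : WCfg, (wStep P)^[8] x =
      wStep P (wStep P (wStep P (wStep P (wStep P (wStep P (wStep P (wStep P x))))))) :=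
    fun x => rfl
  have iter7 : ∀ x : WCfg, (wStep P)^[7] x =
      wStep P (wStep P (wStep P (wStep P (wStep P (wStep P (wStep P x)))))) :=
    fun x => rfl
  cases hσ : c.tape c.pos with
  | false =>
    rw [hσ] at hr
    refine ⟨8, by norm_num, ?_⟩
    cases σ' with
    | false =>
      have hteq : Function.update c.tape c.pos false = c.tape := by
        rw [← hσ]; exact Function.update_eq_self _ _
      cases D with
      | true =>
        have htm : tmStep f c = ⟨j, c.pos + 1, Function.update c.tape c.pos false⟩ := by
          simp [tmStep, hσ, hr]
        have h2 : P[13 * c.q + 2]? = some WInstr.R := by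
          simpa [blkOf, hr, encTR0] using hPk 2 (by norm_num)
        have h3 : P[13 * c.q + 3]? = some WInstr.M := by
          simpa [blkOf, hr, encTR0] using hPk 3 (by norm_num)
        have h4 : P[13 * c.q + 4]? = some WInstr.M := by
          simpa [blkOf, hr, encTR0] using hPk 4 (by norm_num)
        have h5 : P[13 * c.q + 5]? = some WInstr.M := by
          simpa [blkOf, hr, encTR0] using hPk 5 (by norm_num)
        have h6 : P[13 * c.q + 6]? = some WInstr.M := by
          simpa [blkOf, hr, encTR0] using hPk 6 (by norm_num)
        have h7 : P[13 * c.q + 7]? = some (WInstr.J (13 * j)) := by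
          simpa [blkOf, hr, encTR0] using hPk 7 (by norm_num)
        rw [iter8, stepR h0 rfl,
          stepJf h1 (by rw [hw1, hσ]) rfl,
          stepR h2 rfl, stepM h3 rfl, stepM h4 rfl, stepM h5 rfl, stepM h6 rfl,
          stepJt h7 (by simp), htm]
        refine ⟨rfl, by show (2 * c.pos + 1 + 1 : ℤ) = 2 * (c.pos + 1); ring, ?_, ?_⟩
        · dsimp only
          rw [Function.update_apply,
            if_pos (show (2 * (c.pos + 1) : ℤ) = 2 * c.pos + 1 + 1 from by ring)]
        · dsimp only
          rw [hteq]
          exact encA (encA (encA (encA htape (c.pos + 1) _ (by ring)) (c.pos + 1) _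
            (by ring)) (c.pos + 1) _ (by ring)) (c.pos + 1) _ (by ring)
      | false =>
        have htm : tmStep f c = ⟨j, c.pos - 1, Function.update c.tape c.pos false⟩ := by
          simp [tmStep, hσ, hr]
        have h2 : P[13 * c.q + 2]? = some WInstr.L := by
          simpa [blkOf, hr, encTR0] using hPk 2 (by norm_num)
        have h3 : P[13 * c.q + 3]? = some WInstr.L := by
          simpa [blkOf, hr, encTR0] using hPk 3 (by norm_num)
        have h4 : P[13 * c.q + 4]? = some WInstr.L := by
          simpa [blkOf, hr, encTR0] using hPk 4 (by norm_num)
        have h5 : P[13 * c.q + 5]? = some WInstr.M := by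
          simpa [blkOf, hr, encTR0] using hPk 5 (by norm_num)
        have h6 : P[13 * c.q + 6]? = some WInstr.M := by
          simpa [blkOf, hr, encTR0] using hPk 6 (by norm_num)
        have h7 : P[13 * c.q + 7]? = some (WInstr.J (13 * j)) := by
          simpa [blkOf, hr, encTR0] using hPk 7 (by norm_num)
        rw [iter8, stepR h0 rfl,
          stepJf h1 (by rw [hw1, hσ]) rfl,
          stepL h2 rfl, stepL h3 rfl, stepL h4 rfl, stepM h5 rfl, stepM h6 rfl,
          stepJt h7 (by simp), htm]
        refine ⟨rfl, by show (2 * c.pos + 1 - 1 - 1 - 1 : ℤ) = 2 * (c.pos - 1); ring, ?_, ?_⟩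
        · dsimp only
          rw [Function.update_apply,
            if_pos (show (2 * (c.pos - 1) : ℤ) = 2 * c.pos + 1 - 1 - 1 - 1 from by ring)]
        · dsimp only
          rw [hteq]
          exact encA (encA htape (c.pos - 1) _ (by ring)) (c.pos - 1) _ (by ring)
    | true =>
      cases D with
      | true =>
        have htm : tmStep f c = ⟨j, c.pos + 1, Function.update c.tape c.pos true⟩ := by
          simp [tmStep, hσ, hr]
        have h2 : P[13 * c.q + 2]? = some WInstr.M := by
          simpa [blkOf, hr, encTR0] using hPk 2 (by norm_num)
        have h3 : P[13 * c.q + 3]? = some WInstr.R := by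
          simpa [blkOf, hr, encTR0] using hPk 3 (by norm_num)
        have h4 : P[13 * c.q + 4]? = some WInstr.M := by
          simpa [blkOf, hr, encTR0] using hPk 4 (by norm_num)
        have h5 : P[13 * c.q + 5]? = some WInstr.M := by
          simpa [blkOf, hr, encTR0] using hPk 5 (by norm_num)
        have h6 : P[13 * c.q + 6]? = some WInstr.M := by
          simpa [blkOf, hr, encTR0] using hPk 6 (by norm_num)
        have h7 : P[13 * c.q + 7]? = some (WInstr.J (13 * j)) := by
          simpa [blkOf, hr, encTR0] using hPk 7 (by norm_num)
        rw [iter8, stepR h0 rfl,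
          stepJf h1 (by rw [hw1, hσ]) rfl,
          stepM h2 rfl, stepR h3 rfl, stepM h4 rfl, stepM h5 rfl, stepM h6 rfl,
          stepJt h7 (by simp), htm]
        refine ⟨rfl, by show (2 * c.pos + 1 + 1 : ℤ) = 2 * (c.pos + 1); ring, ?_, ?_⟩
        · dsimp only
          rw [Function.update_apply,
            if_pos (show (2 * (c.pos + 1) : ℤ) = 2 * c.pos + 1 + 1 from by ring)]
        · dsimp only
          exact encA (encA (encA (encB htape c.pos _ rfl hmk) (c.pos + 1) _ (by ring))
            (c.pos + 1) _ (by ring)) (c.pos + 1) _ (by ring)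
      | false =>
        have htm : tmStep f c = ⟨j, c.pos - 1, Function.update c.tape c.pos true⟩ := by
          simp [tmStep, hσ, hr]
        have h2 : P[13 * c.q + 2]? = some WInstr.M := by
          simpa [blkOf, hr, encTR0] using hPk 2 (by norm_num)
        have h3 : P[13 * c.q + 3]? = some WInstr.L := by
          simpa [blkOf, hr, encTR0] using hPk 3 (by norm_num)
        have h4 : P[13 * c.q + 4]? = some WInstr.L := by
          simpa [blkOf, hr, encTR0] using hPk 4 (by norm_num)
        have h5 : P[13 * c.q + 5]? = some WInstr.L := by
          simpa [blkOf, hr, encTR0] using hPk 5 (by norm_num)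
        have h6 : P[13 * c.q + 6]? = some WInstr.M := by
          simpa [blkOf, hr, encTR0] using hPk 6 (by norm_num)
        have h7 : P[13 * c.q + 7]? = some (WInstr.J (13 * j)) := by
          simpa [blkOf, hr, encTR0] using hPk 7 (by norm_num)
        rw [iter8, stepR h0 rfl,
          stepJf h1 (by rw [hw1, hσ]) rfl,
          stepM h2 rfl, stepL h3 rfl, stepL h4 rfl, stepL h5 rfl, stepM h6 rfl,
          stepJt h7 (by simp), htm]
        refine ⟨rfl, by show (2 * c.pos + 1 - 1 - 1 - 1 : ℤ) = 2 * (c.pos - 1); ring, ?_, ?_⟩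
        · dsimp only
          rw [Function.update_apply,
            if_pos (show (2 * (c.pos - 1) : ℤ) = 2 * c.pos + 1 - 1 - 1 - 1 from by ring)]
        · dsimp only
          exact encA (encB htape c.pos _ rfl hmk) (c.pos - 1) _ (by ring)
  | true =>
    rw [hσ] at hr
    cases σ' with
    | false => exact absurd hr (hf c.q D j)
    | true =>
      refine ⟨7, by norm_num, ?_⟩
      have hteq : Function.update c.tape c.pos true = c.tape := by
        rw [← hσ]; exact Function.update_eq_self _ _
      cases D with
      | true =>
        have htm : tmStep f c = ⟨j, c.pos + 1, Function.update c.tape c.pos true⟩ := by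
          simp [tmStep, hσ, hr]
        have h8 : P[13 * c.q + 8]? = some WInstr.R := by
          simpa [hr, encTR1] using hHi 0 (by norm_num)
        have h9 : P[13 * c.q + 9]? = some WInstr.M := by
          simpa [hr, encTR1] using hHi 1 (by norm_num)
        have h10 : P[13 * c.q + 10]? = some WInstr.M := by
          simpa [hr, encTR1] using hHi 2 (by norm_num)
        have h11 : P[13 * c.q + 11]? = some WInstr.M := by
          simpa [hr, encTR1] using hHi 3 (by norm_num)
        have h12 : P[13 * c.q + 12]? = some (WInstr.J (13 * j)) := by
          simpa [hr, encTR1] using hHi 4 (by norm_num)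
        rw [iter7, stepR h0 rfl,
          stepJt h1 (by rw [hw1, hσ]),
          stepR h8 rfl, stepM h9 rfl, stepM h10 rfl, stepM h11 rfl,
          stepJt h12 (by simp), htm]
        refine ⟨rfl, by show (2 * c.pos + 1 + 1 : ℤ) = 2 * (c.pos + 1); ring, ?_, ?_⟩
        · dsimp only
          rw [Function.update_apply,
            if_pos (show (2 * (c.pos + 1) : ℤ) = 2 * c.pos + 1 + 1 from by ring)]
        · dsimp only
          rw [hteq]
          exact encA (encA (encA htape (c.pos + 1) _ (by ring)) (c.pos + 1) _ (by ring))
            (c.pos + 1) _ (by ring)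
      | false =>
        have htm : tmStep f c = ⟨j, c.pos - 1, Function.update c.tape c.pos true⟩ := by
          simp [tmStep, hσ, hr]
        have h8 : P[13 * c.q + 8]? = some WInstr.L := by
          simpa [hr, encTR1] using hHi 0 (by norm_num)
        have h9 : P[13 * c.q + 9]? = some WInstr.L := by
          simpa [hr, encTR1] using hHi 1 (by norm_num)
        have h10 : P[13 * c.q + 10]? = some WInstr.L := by
          simpa [hr, encTR1] using hHi 2 (by norm_num)
        have h11 : P[13 * c.q + 11]? = some WInstr.M := by
          simpa [hr, encTR1] using hHi 3 (by norm_num)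
        have h12 : P[13 * c.q + 12]? = some (WInstr.J (13 * j)) := by
          simpa [hr, encTR1] using hHi 4 (by norm_num)
        rw [iter7, stepR h0 rfl,
          stepJt h1 (by rw [hw1, hσ]),
          stepL h8 rfl, stepL h9 rfl, stepL h10 rfl, stepM h11 rfl,
          stepJt h12 (by simp), htm]
        refine ⟨rfl, by show (2 * c.pos + 1 - 1 - 1 - 1 : ℤ) = 2 * (c.pos - 1); ring, ?_, ?_⟩
        · dsimp only
          rw [Function.update_apply,
            if_pos (show (2 * (c.pos - 1) : ℤ) = 2 * c.pos + 1 - 1 - 1 - 1 from by ring)]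
        · dsimp only
          rw [hteq]
          exact encA htape (c.pos - 1) _ (by ring)
end

section
/- In the encoding of jump instructions for Hasenjaeger's machine, with a Wang B machine program of n instructions encoded on a circular tape as ⟨I_0⟩⟨I_1⟩...⟨I_{n-1}⟩⟨J(n)⟩, where ⟨M⟩ = 1, ⟨R⟩ = 01, ⟨L⟩ = 001, and ⟨J(x)⟩ = 000 0^y 1 with y = k−x if x ≤ k and y = n+1+k−x if x > k (for a jump J(x) at program position k), the following holds: starting from the first bit of ⟨I_k⟩ and moving left on the circular encoded program until the symbol 1 has been read exactly y+1 times, then moving right two cells, the head lands on the first bit of ⟨I_x⟩. -/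
private lemma count_true_eq_sum9 (l : List Bool) :
    l.count true = ∑ q ∈ Finset.range l.length, (if l.getD q false = true then 1 else 0) := by
  induction l with
  | nil => simp
  | cons a t ih =>
    rw [List.length_cons, Finset.sum_range_succ']
    simp only [List.getD_cons_succ, List.getD_cons_zero, ← ih]
    cases a <;> simp [List.count_cons]

private lemma joinlen_le9 (B : ℕ → List Bool) {a b : ℕ} (h : a ≤ b) :
    (((List.range a).map B).flatten).length ≤ (((List.range b).map B).flatten).length := by
  induction b with
  | zero => simp_all
  | succ b ih =>
    rcases Nat.eq_or_lt_of_le h with rfl | h'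
    · exact le_rfl
    · calc (((List.range a).map B).flatten).length ≤ (((List.range b).map B).flatten).length :=
            ih (by omega)
        _ ≤ (((List.range (b+1)).map B).flatten).length := by
            rw [List.range_succ]; simp

private lemma getD_join_block9 (B : ℕ → List Bool) :
    ∀ N m, m < N → ∀ q < (B m).length,
      (((List.range N).map B).flatten).getD ((((List.range m).map B).flatten).length + q) false
        = (B m).getD q false := by
  intro N
  induction N with
  | zero => intro m hm q hq; exact absurd hm (Nat.not_lt_zero m)
  | succ N ih =>
    intro m hm q hq
    rw [List.range_succ, List.map_append, List.flatten_append]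
    rcases Nat.lt_or_ge m N with h | h
    · rw [List.getD_append]
      · exact ih m h q hq
      · have h1 : (((List.range (m+1)).map B).flatten).length ≤
            (((List.range N).map B).flatten).length := joinlen_le9 B h
        rw [List.range_succ, List.map_append, List.flatten_append, List.length_append] at h1
        simp at h1 ⊢
        omega
    · have hmN : m = N := by omega
      subst hmN
      rw [List.getD_append_right _ _ _ _ (Nat.le_add_right _ _)]
      simp

/-- Hasenjaeger's relative-addressing scan on the circular program tape.  The encoded
program consists of `n + 1` blocks `⟨I_0⟩, …, ⟨I_{n-1}⟩, ⟨J(n)⟩`, each a binary word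
containing exactly one `1`, as its last symbol.  For a jump `J(x)` at program position
`k`, with offset `y = k − x` if `x ≤ k` and `y = n + 1 + k − x` otherwise: scanning left
on the circular tape from just before the first bit of `⟨I_k⟩` until the symbol `1` has
been read exactly `y + 1` times (the head ending one cell left of that `1`), and then
moving right two cells, the head lands on the first bit of `⟨I_x⟩`. -/
theorem stmt9 (n : ℕ) (B : ℕ → List Bool)
    (hB : ∀ i ≤ n, (B i).count true = 1 ∧ (B i).getLast? = some true)
    (k x : ℕ) (hk : k ≤ n) (hx : x ≤ n) :
    ∃ j : ℕ,
      ((Finset.range (j + 1)).filter (fun i : ℕ =>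
          (((List.range (n + 1)).map B).flatten).getD
            (((((((List.range k).map B).flatten).length : ℤ) - 1 - (i : ℤ)) %
              ((((List.range (n + 1)).map B).flatten).length : ℤ)).toNat) false = true)).card
        = (if x ≤ k then k - x else n + 1 + k - x) + 1 ∧
      (((List.range (n + 1)).map B).flatten).getD
          (((((((List.range k).map B).flatten).length : ℤ) - 1 - (j : ℤ)) %
            ((((List.range (n + 1)).map B).flatten).length : ℤ)).toNat) false = true ∧
      (((((List.range k).map B).flatten).length : ℤ) - 1 - (j : ℤ) - 1 + 2) %
          ((((List.range (n + 1)).map B).flatten).length : ℤ)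
        = ((((List.range x).map B).flatten).length : ℤ) %
          ((((List.range (n + 1)).map B).flatten).length : ℤ) := by
  classical
  have hBc : ∀ i ≤ n, (B i).count true = 1 := fun i h => (hB i h).1
  have hlen1 : ∀ i ≤ n, 1 ≤ (B i).length := by
    intro i h
    have hm : true ∈ B i := List.count_pos_iff.mp (by rw [hBc i h]; omega)
    have := List.ne_nil_of_mem hm
    have := List.length_pos_iff.mpr this
    omega
  have hstep : ∀ m, (((List.range (m+1)).map B).flatten).length
      = (((List.range m).map B).flatten).length + (B m).length := by
    intro m; rw [List.range_succ]; simp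
  have hgrow : ∀ b ≤ n + 1, ∀ a, a ≤ b →
      (((List.range a).map B).flatten).length + (b - a) ≤
        (((List.range b).map B).flatten).length := by
    intro b
    induction b with
    | zero => intro _ a ha; interval_cases a; simp
    | succ b ih =>
      intro hb a ha
      rcases Nat.eq_or_lt_of_le ha with rfl | h
      · simp
      · have h1 := ih (by omega) a (by omega)
        have h2 := hlen1 b (by omega)
        rw [hstep]; omega
  set T := ((List.range (n + 1)).map B).flatten with hT
  have hblock : ∀ m, m ≤ n → ∀ q < (B m).length,
      T.getD ((((List.range m).map B).flatten).length + q) false = (B m).getD q false := by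
    intro m hm q hq
    rw [hT]
    exact getD_join_block9 B (n+1) m (by omega) q hq
  have hS : ∀ m ≤ n + 1,
      (∑ p ∈ Finset.range ((((List.range m).map B).flatten).length),
        (if T.getD p false = true then 1 else 0)) = m := by
    intro m
    induction m with
    | zero => intro _; simp
    | succ m ih =>
      intro hm
      rw [hstep, Finset.sum_range_add, ih (by omega)]
      have hcong : ∀ q ∈ Finset.range (B m).length,
          (if T.getD ((((List.range m).map B).flatten).length + q) false = true then (1:ℕ) else 0)
            = (if (B m).getD q false = true then (1:ℕ) else 0) := by
        intro q hq
        rw [hblock m (by omega) q (Finset.mem_range.mp hq)]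
      rw [Finset.sum_congr rfl hcong, ← count_true_eq_sum9, hBc m (by omega)]
  have hone : ∀ m ≤ n, T.getD ((((List.range (m+1)).map B).flatten).length - 1) false = true := by
    intro m hm
    have h1 := hlen1 m hm
    have h2 := hblock m hm ((B m).length - 1) (by omega)
    have h3 : (((List.range (m+1)).map B).flatten).length - 1
        = (((List.range m).map B).flatten).length + ((B m).length - 1) := by
      rw [hstep]; omega
    rw [h3, h2]
    have h4 := (hB m hm).2
    rw [List.getLast?_eq_getElem?] at h4
    rw [List.getD_eq_getElem?_getD, h4]
    rfl
  -- specialised facts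
  have hSk := hS k (by omega)
  have hSx := hS x (by omega)
  have hSL := hS (n+1) le_rfl
  have hgk := hgrow (n+1) le_rfl k (by omega)
  have hgx := hgrow (n+1) le_rfl x (by omega)
  have hLT : (((List.range (n+1)).map B).flatten).length = T.length := by rw [hT]
  rw [hLT] at hSL hgk hgx
  have honeL : T.getD (T.length - 1) false = true := by
    have h := hone n le_rfl
    rwa [hLT] at h
  have honex : 1 ≤ x → T.getD ((((List.range x).map B).flatten).length - 1) false = true := by
    intro hx1
    have h := hone (x-1) (by omega)
    have hxx : x - 1 + 1 = x := by omega
    rwa [hxx] at h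
  have hxk : x ≤ k → (((List.range x).map B).flatten).length ≤
      (((List.range k).map B).flatten).length := fun h => joinlen_le9 B h
  have hkx : k < x → (((List.range k).map B).flatten).length + (x - k) ≤
      (((List.range x).map B).flatten).length := fun h => hgrow x (by omega) k (by omega)
  have hx1px : 1 ≤ x → x ≤ (((List.range x).map B).flatten).length := by
    intro h
    have h2 := hgrow x (by omega) 0 (by omega)
    simpa using h2
  set pk := (((List.range k).map B).flatten).length with hpk
  set px := (((List.range x).map B).flatten).length with hpx
  set L := T.length with hLdef
  have hL1 : 1 ≤ L := by omega
  have pos1 : ∀ i : ℕ, i < pk → (((pk : ℤ) - 1 - (i : ℤ)) % (L : ℤ)).toNat = pk - 1 - i := by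
    intro i hi
    rw [Int.emod_eq_of_lt (by omega) (by omega)]
    omega
  have pos2 : ∀ i : ℕ, pk ≤ i → i < pk + L →
      (((pk : ℤ) - 1 - (i : ℤ)) % (L : ℤ)).toNat = L + pk - 1 - i := by
    intro i h1 h2
    have e1 : ((pk:ℤ) - 1 - (i:ℤ) + (L:ℤ) * 1) % (L:ℤ) = ((pk:ℤ) - 1 - (i:ℤ)) % (L:ℤ) :=
      Int.add_mul_emod_self_left ((pk:ℤ) - 1 - (i:ℤ)) (L:ℤ) 1
    rw [← e1, Int.emod_eq_of_lt (by omega) (by omega)]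
    omega
  -- the inner-sum evaluation used in all branches
  have e3 : 1 ≤ x → (∑ p ∈ Finset.range (px - 1),
      (if T.getD p false = true then (1:ℕ) else 0)) = x - 1 := by
    intro hx1
    have h5 := Finset.sum_range_succ (fun p => if T.getD p false = true then (1:ℕ) else 0) (px - 1)
    have h6 : px - 1 + 1 = px := by omega
    rw [h6, hSx, honex hx1] at h5
    simp only [eq_self_iff_true, if_true] at h5
    omega
  rcases Nat.lt_or_ge k x with hcase | hcase
  · -- case k < x : j = L + pk - px
    have hpkpx := hkx hcase
    have hx1 : 1 ≤ x := by omega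
    have hpx1 := hx1px hx1
    refine ⟨L + pk - px, ?_, ?_, ?_⟩
    · rw [Finset.card_filter, if_neg (by omega)]
      have hj1 : (L + pk - px) + 1 = pk + (L - px + 1) := by omega
      rw [hj1, Finset.sum_range_add]
      have e1 : ∀ i ∈ Finset.range pk,
          (if T.getD ((((pk:ℤ) - 1 - (i:ℤ)) % (L:ℤ)).toNat) false = true then (1:ℕ) else 0)
            = (if T.getD (pk - 1 - i) false = true then (1:ℕ) else 0) := by
        intro i hi
        rw [Finset.mem_range] at hi
        rw [pos1 i hi]
      have e1r : (∑ i ∈ Finset.range pk, if T.getD (pk - 1 - i) false = true then (1:ℕ) else 0)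
          = ∑ i ∈ Finset.range pk, if T.getD i false = true then (1:ℕ) else 0 :=
        Finset.sum_range_reflect (fun i => if T.getD i false = true then (1:ℕ) else 0) pk
      rw [Finset.sum_congr rfl e1, e1r, hSk]
      have e5 : ∀ i ∈ Finset.range (L - px + 1),
          (if T.getD ((((pk:ℤ) - 1 - ((pk + i : ℕ):ℤ)) % (L:ℤ)).toNat) false = true then (1:ℕ) else 0)
            = (if T.getD (px - 1 + (L - px + 1 - 1 - i)) false = true then (1:ℕ) else 0) := by
        intro i hi
        rw [Finset.mem_range] at hi
        rw [pos2 (pk + i) (by omega) (by omega)]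
        have harg : L + pk - 1 - (pk + i) = px - 1 + (L - px + 1 - 1 - i) := by omega
        rw [harg]
      rw [Finset.sum_congr rfl e5]
      have e4 : (∑ i ∈ Finset.range (L - px + 1),
            if T.getD (px - 1 + (L - px + 1 - 1 - i)) false = true then (1:ℕ) else 0)
          = ∑ i ∈ Finset.range (L - px + 1),
            if T.getD (px - 1 + i) false = true then (1:ℕ) else 0 :=
        Finset.sum_range_reflect (fun i => if T.getD (px - 1 + i) false = true then (1:ℕ) else 0) _
      rw [e4]
      have e2 : (∑ p ∈ Finset.range L, (if T.getD p false = true then (1:ℕ) else 0))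
          = (∑ p ∈ Finset.range (px - 1), (if T.getD p false = true then (1:ℕ) else 0))
            + ∑ i ∈ Finset.range (L - px + 1),
                (if T.getD (px - 1 + i) false = true then (1:ℕ) else 0) := by
        have h := Finset.sum_range_add (fun p => if T.getD p false = true then (1:ℕ) else 0)
          (px - 1) (L - px + 1)
        simpa [show px - 1 + (L - px + 1) = L from by omega] using h
      rw [hSL] at e2
      have h3 := e3 hx1
      omega
    · rw [pos2 (L + pk - px) (by omega) (by omega)]
      have harg : L + pk - 1 - (L + pk - px) = px - 1 := by omega
      rw [harg]
      exact honex hx1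
    · have harg : (pk:ℤ) - 1 - ((L + pk - px : ℕ):ℤ) - 1 + 2 = (px:ℤ) + (L:ℤ) * (-1) := by omega
      rw [harg, Int.add_mul_emod_self_left]
  · -- case x ≤ k
    rcases Nat.eq_zero_or_pos x with hx0 | hx1
    · -- x = 0 : j = pk
      have hpx0 : px = 0 := by rw [hpx, hx0]; simp
      refine ⟨pk, ?_, ?_, ?_⟩
      · rw [Finset.card_filter, if_pos hcase, Finset.sum_range_succ]
        rw [pos2 pk le_rfl (by omega)]
        have harg : L + pk - 1 - pk = L - 1 := by omega
        rw [harg, honeL]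
        have e1 : ∀ i ∈ Finset.range pk,
            (if T.getD ((((pk:ℤ) - 1 - (i:ℤ)) % (L:ℤ)).toNat) false = true then (1:ℕ) else 0)
              = (if T.getD (pk - 1 - i) false = true then (1:ℕ) else 0) := by
          intro i hi
          rw [Finset.mem_range] at hi
          rw [pos1 i hi]
        have e1r : (∑ i ∈ Finset.range pk, if T.getD (pk - 1 - i) false = true then (1:ℕ) else 0)
            = ∑ i ∈ Finset.range pk, if T.getD i false = true then (1:ℕ) else 0 :=
          Finset.sum_range_reflect (fun i => if T.getD i false = true then (1:ℕ) else 0) pk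
        rw [Finset.sum_congr rfl e1, e1r, hSk]
        simp only [eq_self_iff_true, if_true]
        omega
      · rw [pos2 pk le_rfl (by omega)]
        have harg : L + pk - 1 - pk = L - 1 := by omega
        rw [harg]
        exact honeL
      · have harg : (pk:ℤ) - 1 - ((pk : ℕ):ℤ) - 1 + 2 = (0:ℤ) := by omega
        rw [harg, show ((px:ℕ):ℤ) = (0:ℤ) from by omega]
    · -- 1 ≤ x ≤ k : j = pk - px
      have hpxpk := hxk hcase
      have hpx1 := hx1px hx1
      refine ⟨pk - px, ?_, ?_, ?_⟩
      · rw [Finset.card_filter, if_pos hcase]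
        have e1 : ∀ i ∈ Finset.range (pk - px + 1),
            (if T.getD ((((pk:ℤ) - 1 - (i:ℤ)) % (L:ℤ)).toNat) false = true then (1:ℕ) else 0)
              = (if T.getD (px - 1 + (pk - px + 1 - 1 - i)) false = true then (1:ℕ) else 0) := by
          intro i hi
          rw [Finset.mem_range] at hi
          rw [pos1 i (by omega)]
          have harg : pk - 1 - i = px - 1 + (pk - px + 1 - 1 - i) := by omega
          rw [harg]
        rw [Finset.sum_congr rfl e1]
        have e4 : (∑ i ∈ Finset.range (pk - px + 1),
              if T.getD (px - 1 + (pk - px + 1 - 1 - i)) false = true then (1:ℕ) else 0)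
            = ∑ i ∈ Finset.range (pk - px + 1),
              if T.getD (px - 1 + i) false = true then (1:ℕ) else 0 :=
          Finset.sum_range_reflect (fun i => if T.getD (px - 1 + i) false = true then (1:ℕ) else 0) _
        rw [e4]
        have e2 : (∑ p ∈ Finset.range pk, (if T.getD p false = true then (1:ℕ) else 0))
            = (∑ p ∈ Finset.range (px - 1), (if T.getD p false = true then (1:ℕ) else 0))
              + ∑ i ∈ Finset.range (pk - px + 1),
                  (if T.getD (px - 1 + i) false = true then (1:ℕ) else 0) := by
          have h := Finset.sum_range_add (fun p => if T.getD p false = true then (1:ℕ) else 0)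
            (px - 1) (pk - px + 1)
          simpa [show px - 1 + (pk - px + 1) = pk from by omega] using h
        rw [hSk] at e2
        have h3 := e3 hx1
        omega
      · rw [pos1 (pk - px) (by omega)]
        have harg : pk - 1 - (pk - px) = px - 1 := by omega
        rw [harg]
        exact honex hx1
      · have harg : (pk:ℤ) - 1 - ((pk - px : ℕ):ℤ) - 1 + 2 = (px:ℤ) := by omega
        rw [harg]
end

section
/- Hasenjaeger's machine H (a 4-state three-tape machine with the 14 transition rules of Table 1) simulates a single Wang B machine instruction M in exactly 1 step, R in exactly 2 steps, L in exactly 3 steps, and a jump instruction J(x) in O(n^2) steps, where n is the number of instructions of the simulated Wang B machine; hence for a fixed Wang B machine W running in time t, H simulates W in O(t) steps. -/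
/-- The jump offset of Equation (7): `y = k − x` if `x ≤ k`, else `y = n + 1 + k − x`. -/
def jumpOffset (n k x : ℕ) : ℕ := if x ≤ k then k - x else n + 1 + k - x

/-- Encoding of a Wang B machine instruction at program position `k` (program of `n`
instructions): `⟨M⟩ = 1`, `⟨R⟩ = 01`, `⟨L⟩ = 001`, `⟨J(x)⟩ = 000·0^y·1`. -/
def encInstr (n k : ℕ) : WInstr → List Bool
  | WInstr.M => [true]
  | WInstr.R => [false, true]
  | WInstr.L => [false, false, true]
  | WInstr.J x => List.replicate (3 + jumpOffset n k x) false ++ [true]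

/-- The encoded program `⟨W⟩ = ⟨I_0⟩⟨I_1⟩…⟨I_{n-1}⟩⟨J(n)⟩` placed on the circular
program tape `P` (a trailing self-jump `⟨J(n)⟩` is appended). -/
def encProg (W : List WInstr) : List Bool :=
  ((List.range W.length).map (fun k => encInstr W.length k (W.getD k WInstr.M))).flatten
    ++ encInstr W.length W.length (WInstr.J W.length)

/-- Index on the program tape of the first bit of the encoding of instruction `k`. -/
def pStart (W : List WInstr) (k : ℕ) : ℕ :=
  (((List.range k).map (fun k' => encInstr W.length k' (W.getD k' WInstr.M))).flatten).length

/-- A configuration of Hasenjaeger's three-tape machine: state (one of four), head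
positions on the circular program tape `P`, the circular counter tape `C`, and the
bi-infinite non-erasing work tape `W`, plus the contents of the work tape. -/
structure HCfg : Type where
  state : Fin 4
  pP : ℤ
  pC : ℤ
  pW : ℤ
  tapeW : ℤ → Bool

/-- Reading the circular program tape. -/
def readP (P : List Bool) (z : ℤ) : Bool := P.getD (z % (P.length : ℤ)).toNat false

/-- Reading the circular counter tape of length `n + 2`, all `1`s except a single `0`. -/
def readC (n : ℕ) (z : ℤ) : Bool := decide (z % ((n : ℤ) + 2) ≠ 0)

/-- One step of Hasenjaeger's machine, implementing the 14 transition rules of Table 1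
(states `q1,…,q4` are `0,…,3`). -/
def hStep (P : List Bool) (n : ℕ) (c : HCfg) : HCfg :=
  let p := readP P c.pP
  let cc := readC n c.pC
  let w := c.tapeW c.pW
  if c.state = 0 then
    if p then
      if w then ⟨0, c.pP + 1, c.pC, c.pW, c.tapeW⟩                                -- rule 2
      else ⟨0, c.pP + 1, c.pC, c.pW, Function.update c.tapeW c.pW true⟩           -- rule 1
    else ⟨1, c.pP + 1, c.pC, c.pW, c.tapeW⟩                                       -- rule 3
  else if c.state = 1 then
    if cc then
      if p then ⟨0, c.pP + 1, c.pC - 1, c.pW - 1, c.tapeW⟩                        -- rule 6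
      else ⟨2, c.pP + 1, c.pC - 1, c.pW, c.tapeW⟩                                 -- rule 7
    else
      if p then ⟨0, c.pP + 1, c.pC, c.pW + 1, c.tapeW⟩                            -- rule 4
      else ⟨1, c.pP + 1, c.pC + 1, c.pW, c.tapeW⟩                                 -- rule 5
  else if c.state = 2 then
    if w then
      if p then ⟨3, c.pP - 1, c.pC + 1, c.pW, c.tapeW⟩                            -- rule 11
      else ⟨2, c.pP + 1, c.pC + 1, c.pW, c.tapeW⟩                                 -- rule 10
    else
      if p then ⟨0, c.pP + 1, c.pC, c.pW, c.tapeW⟩                                -- rule 9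
      else ⟨2, c.pP + 1, c.pC, c.pW, c.tapeW⟩                                     -- rule 8
  else
    if cc then
      if p then ⟨3, c.pP - 1, c.pC - 1, c.pW, c.tapeW⟩                            -- rule 13
      else ⟨3, c.pP - 1, c.pC, c.pW, c.tapeW⟩                                     -- rule 12
    else ⟨0, c.pP + 1, c.pC, c.pW, c.tapeW⟩                                       -- rule 14

/-- Hasenjaeger's configuration `hc` encodes the Wang B machine configuration `wc`:
state `q1`, `P`-head on the first bit of the current encoded instruction, `C`-head on
the unique `0` of the counter tape, and work tape identical to the Wang tape. -/
def HEnc (W : List WInstr) (wc : WCfg) (hc : HCfg) : Prop :=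
  hc.state = 0 ∧
  hc.pP % ((encProg W).length : ℤ) = (pStart W wc.ip : ℤ) ∧
  hc.pC % ((W.length : ℤ) + 2) = 0 ∧
  hc.pW = wc.pos ∧ hc.tapeW = wc.tape
namespace H11

def iota (W : List WInstr) (k : ℕ) : WInstr :=
  if k < W.length then W.getD k WInstr.M else WInstr.J W.length

def e (W : List WInstr) (k : ℕ) : List Bool := encInstr W.length k (iota W k)

def S (W : List WInstr) (k : ℕ) : ℕ := (((List.range k).map (e W)).flatten).length

def z (W : List WInstr) (k : ℕ) : ℕ := (e W k).length - 1

lemma encInstr_shape (n k : ℕ) (I : WInstr) :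
    encInstr n k I = List.replicate ((encInstr n k I).length - 1) false ++ [true] := by
  cases I <;> simp [encInstr]

lemma e_shape (W : List WInstr) (k : ℕ) :
    e W k = List.replicate (z W k) false ++ [true] := encInstr_shape _ _ _

lemma e_len (W : List WInstr) (k : ℕ) : (e W k).length = z W k + 1 := by
  rw [e_shape]; simp

lemma S_zero (W : List WInstr) : S W 0 = 0 := rfl

lemma S_succ (W : List WInstr) (k : ℕ) : S W (k+1) = S W k + (e W k).length := by
  simp [S, List.range_succ]

lemma S_mono (W : List WInstr) {k m : ℕ} (h : k ≤ m) : S W k ≤ S W m := by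
  induction h with
  | refl => exact le_rfl
  | step h ih => exact le_trans ih (by rw [S_succ]; exact Nat.le_add_right _ _)

lemma encProg_eq (W : List WInstr) :
    encProg W = ((List.range (W.length + 1)).map (e W)).flatten := by
  rw [List.range_succ]
  simp only [List.map_append, List.flatten_append, List.map_cons, List.map_nil,
    List.flatten_cons, List.flatten_nil, List.append_nil]
  unfold encProg
  congr 1
  · apply congrArg; apply List.map_congr_left
    intro k hk
    simp only [List.mem_range] at hk
    simp [e, iota, hk]
  · simp [e, iota]

lemma lengthP (W : List WInstr) : (encProg W).length = S W (W.length + 1) := by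
  rw [encProg_eq]; rfl

lemma pStart_eq (W : List WInstr) {k : ℕ} (h : k ≤ W.length) : pStart W k = S W k := by
  unfold pStart S
  congr 2
  apply List.map_congr_left
  intro k' hk'
  simp only [List.mem_range] at hk'
  simp [e, iota, show k' < W.length by omega]

lemma L_pos (W : List WInstr) : 0 < S W (W.length + 1) := by
  have := S_succ W W.length; have := e_len W W.length; omega

lemma getP (W : List WInstr) {k j : ℕ} (hk : k ≤ W.length) (hj : j < (e W k).length) :
    (encProg W).getD (S W k + j) false = (e W k).getD j false := by
  rw [encProg_eq]
  have hsplit : W.length + 1 = k + (W.length + 1 - k) := by omega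
  rw [hsplit, List.range_add, List.map_append, List.flatten_append]
  have hlen : (((List.range k).map (e W)).flatten).length = S W k := rfl
  rw [List.getD_append_right _ _ _ _ (by omega), hlen, Nat.add_sub_cancel_left]
  have hm : ∃ m, W.length + 1 - k = m + 1 := ⟨W.length - k, by omega⟩
  obtain ⟨m, hm⟩ := hm
  rw [hm, List.range_succ_eq_map]
  simp only [List.map_cons, List.map_map, List.flatten_cons, Nat.add_zero]
  rw [List.getD_append _ _ _ _ (by simpa using hj)]

end H11
namespace H11

-- abbreviation for total length
lemma readP_congr (W : List WInstr) {a b : ℤ}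
    (h : a % ((encProg W).length : ℤ) = b % ((encProg W).length : ℤ)) :
    readP (encProg W) a = readP (encProg W) b := by
  unfold readP; rw [h]

lemma readP_val (W : List WInstr) {a : ℤ} {m : ℕ} (hm : m < S W (W.length + 1))
    (ha : a % ((S W (W.length + 1) : ℕ) : ℤ) = (m : ℤ)) :
    readP (encProg W) a = (encProg W).getD m false := by
  unfold readP
  rw [lengthP, ha]
  simp

lemma getD_shape {zz j : ℕ} (hj : j ≤ zz) :
    (List.replicate zz false ++ [true]).getD j false = (if j = zz then true else false) := by
  rcases Nat.lt_or_ge j zz with h | h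
  · rw [List.getD_append _ _ _ _ (by simpa using h)]
    simp [List.getD_eq_getElem?_getD, List.getElem?_replicate, h, Nat.ne_of_lt h]
  · have hjz : j = zz := by omega
    subst hjz
    rw [List.getD_append_right _ _ _ _ (by simp)]
    simp

lemma bit_val (W : List WInstr) {k j : ℕ} (hk : k ≤ W.length) (hj : j ≤ z W k) {a : ℤ}
    (ha : a % ((S W (W.length + 1) : ℕ) : ℤ) = ((S W k + j : ℕ) : ℤ)) :
    readP (encProg W) a = (if j = z W k then true else false) := by
  have hjl : j < (e W k).length := by rw [e_len]; omega
  have hlt : S W k + j < S W (W.length + 1) := by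
    have h1 : S W k + (e W k).length = S W (k + 1) := (S_succ W k).symm
    have h2 : S W (k+1) ≤ S W (W.length + 1) := S_mono W (by omega)
    omega
  rw [readP_val W hlt ha, getP W hk hjl, e_shape]
  exact getD_shape hj

lemma readC_val (n : ℕ) {a : ℤ} {m : ℤ} (hm : a % ((n : ℤ) + 2) = m) :
    readC n a = decide (m ≠ 0) := by
  unfold readC; rw [hm]

end H11
namespace H11
variable {P : List Bool} {n : ℕ} {a pC pW : ℤ} {tw : ℤ → Bool}

lemma rule1 (hp : readP P a = true) (hw : tw pW = false) :
    hStep P n ⟨0,a,pC,pW,tw⟩ = ⟨0,a+1,pC,pW,Function.update tw pW true⟩ := by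
  simp [hStep, hp, hw]

lemma rule2 (hp : readP P a = true) (hw : tw pW = true) :
    hStep P n ⟨0,a,pC,pW,tw⟩ = ⟨0,a+1,pC,pW,tw⟩ := by
  simp [hStep, hp, hw]

lemma rule3 (hp : readP P a = false) :
    hStep P n ⟨0,a,pC,pW,tw⟩ = ⟨1,a+1,pC,pW,tw⟩ := by
  simp [hStep, hp]

lemma rule4 (hcc : readC n pC = false) (hp : readP P a = true) :
    hStep P n ⟨1,a,pC,pW,tw⟩ = ⟨0,a+1,pC,pW+1,tw⟩ := by
  simp [hStep, hcc, hp]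

lemma rule5 (hcc : readC n pC = false) (hp : readP P a = false) :
    hStep P n ⟨1,a,pC,pW,tw⟩ = ⟨1,a+1,pC+1,pW,tw⟩ := by
  simp [hStep, hcc, hp]

lemma rule6 (hcc : readC n pC = true) (hp : readP P a = true) :
    hStep P n ⟨1,a,pC,pW,tw⟩ = ⟨0,a+1,pC-1,pW-1,tw⟩ := by
  simp [hStep, hcc, hp]

lemma rule7 (hcc : readC n pC = true) (hp : readP P a = false) :
    hStep P n ⟨1,a,pC,pW,tw⟩ = ⟨2,a+1,pC-1,pW,tw⟩ := by
  simp [hStep, hcc, hp]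

lemma rule8 (hw : tw pW = false) (hp : readP P a = false) :
    hStep P n ⟨2,a,pC,pW,tw⟩ = ⟨2,a+1,pC,pW,tw⟩ := by
  simp [hStep, hw, hp]

lemma rule9 (hw : tw pW = false) (hp : readP P a = true) :
    hStep P n ⟨2,a,pC,pW,tw⟩ = ⟨0,a+1,pC,pW,tw⟩ := by
  simp [hStep, hw, hp]

lemma rule10 (hw : tw pW = true) (hp : readP P a = false) :
    hStep P n ⟨2,a,pC,pW,tw⟩ = ⟨2,a+1,pC+1,pW,tw⟩ := by
  simp [hStep, hw, hp]

lemma rule11 (hw : tw pW = true) (hp : readP P a = true) :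
    hStep P n ⟨2,a,pC,pW,tw⟩ = ⟨3,a-1,pC+1,pW,tw⟩ := by
  simp [hStep, hw, hp]

lemma rule12 (hcc : readC n pC = true) (hp : readP P a = false) :
    hStep P n ⟨3,a,pC,pW,tw⟩ = ⟨3,a-1,pC,pW,tw⟩ := by
  simp [hStep, hcc, hp]

lemma rule13 (hcc : readC n pC = true) (hp : readP P a = true) :
    hStep P n ⟨3,a,pC,pW,tw⟩ = ⟨3,a-1,pC-1,pW,tw⟩ := by
  simp [hStep, hcc, hp]

lemma rule14 (hcc : readC n pC = false) :
    hStep P n ⟨3,a,pC,pW,tw⟩ = ⟨0,a+1,pC,pW,tw⟩ := by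
  simp [hStep, hcc]

end H11
namespace H11
variable {P : List Bool} {n : ℕ}

lemma run2_false (m : ℕ) : ∀ (a : ℤ) (pC pW : ℤ) (tw : ℤ → Bool), tw pW = false →
    (∀ j : ℕ, j < m → readP P (a + j) = false) →
    (hStep P n)^[m] ⟨2,a,pC,pW,tw⟩ = ⟨2,a+m,pC,pW,tw⟩ := by
  induction m with
  | zero => intro a pC pW tw _ _; simp
  | succ m ih =>
    intro a pC pW tw hw hz
    rw [Function.iterate_succ_apply]
    have h0 : readP P a = false := by simpa using hz 0 (by omega)
    rw [rule8 hw h0, ih (a+1) pC pW tw hw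
      (fun j hj => by
        have := hz (j+1) (by omega)
        rw [← this]; congr 1; push_cast; ring)]
    congr 1; push_cast; ring

lemma run2_true (m : ℕ) : ∀ (a : ℤ) (pC pW : ℤ) (tw : ℤ → Bool), tw pW = true →
    (∀ j : ℕ, j < m → readP P (a + j) = false) →
    (hStep P n)^[m] ⟨2,a,pC,pW,tw⟩ = ⟨2,a+m,pC+m,pW,tw⟩ := by
  induction m with
  | zero => intro a pC pW tw _ _; simp
  | succ m ih =>
    intro a pC pW tw hw hz
    rw [Function.iterate_succ_apply]
    have h0 : readP P a = false := by simpa using hz 0 (by omega)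
    rw [rule10 hw h0, ih (a+1) (pC+1) pW tw hw
      (fun j hj => by
        have := hz (j+1) (by omega)
        rw [← this]; congr 1; push_cast; ring)]
    congr 1 <;> push_cast <;> ring

lemma run3_zeros (m : ℕ) : ∀ (a : ℤ) (pC pW : ℤ) (tw : ℤ → Bool), readC n pC = true →
    (∀ j : ℕ, j < m → readP P (a - j) = false) →
    (hStep P n)^[m] ⟨3,a,pC,pW,tw⟩ = ⟨3,a-m,pC,pW,tw⟩ := by
  induction m with
  | zero => intro a pC pW tw _ _; simp
  | succ m ih =>
    intro a pC pW tw hcc hz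
    rw [Function.iterate_succ_apply]
    have h0 : readP P a = false := by simpa using hz 0 (by omega)
    rw [rule12 hcc h0, ih (a-1) pC pW tw hcc
      (fun j hj => by
        have := hz (j+1) (by omega)
        rw [← this]; congr 1; push_cast; ring)]
    congr 1; push_cast; ring

end H11
namespace H11

lemma emod_shift (L : ℤ) {a v : ℤ} (ha : a % L = v) (c w : ℤ) (h : (v + c) % L = w) :
    (a + c) % L = w := by
  obtain ⟨q, hq⟩ : ∃ q, a = L * q + v := ⟨a / L, by rw [← ha]; exact (Int.mul_ediv_add_emod a L).symm⟩
  subst hq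
  rw [show L * q + v + c = v + c + q * L by ring, Int.add_mul_emod_self_right]
  exact h

lemma emod_small {L w : ℤ} (h0 : 0 ≤ w) (h1 : w < L) : w % L = w := Int.emod_eq_of_lt h0 h1

lemma emod_neg_small {L w : ℤ} (h0 : 0 ≤ w + L) (h1 : w < 0) : w % L = w + L := by
  conv_lhs => rw [show w = (w + L) + (-1) * L by ring]
  rw [Int.add_mul_emod_self_right]
  exact Int.emod_eq_of_lt h0 (by omega)

def prevI (n k : ℕ) : ℕ := if k = 0 then n else k - 1

lemma prevI_le {n k : ℕ} (h : k ≤ n) : prevI n k ≤ n := by unfold prevI; split <;> omega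

lemma prevI_iter_le {n : ℕ} : ∀ {j k : ℕ}, j ≤ k → (prevI n)^[j] k = k - j := by
  intro j
  induction j with
  | zero => intro k _; simp
  | succ j ih =>
    intro k hj
    rw [Function.iterate_succ_apply', ih (by omega)]
    unfold prevI
    rw [if_neg (by omega)]
    omega

lemma prevI_wrap {n k : ℕ} : (prevI n)^[k+1] k = n := by
  rw [Function.iterate_succ_apply', prevI_iter_le (le_refl k)]
  simp [prevI]

lemma prevI_target {n k x : ℕ} (hk : k < n) (hx : x ≤ n) :
    (prevI n)^[jumpOffset n k x + 1] k = if x = 0 then n else x - 1 := by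
  unfold jumpOffset
  rcases le_or_gt x k with hxk | hxk
  · rw [if_pos hxk]
    rcases Nat.eq_zero_or_pos x with hx0 | hx0
    · subst hx0
      simp only [Nat.sub_zero, if_pos rfl]
      exact prevI_wrap
    · rw [if_neg (by omega), prevI_iter_le (by omega)]
      omega
  · rw [if_neg (by omega), if_neg (by omega)]
    have hsplit : n + 1 + k - x + 1 = (n + 1 - x) + (k + 1) := by omega
    rw [hsplit, Function.iterate_add_apply, prevI_wrap, prevI_iter_le (by omega)]
    omega

lemma E_lt (W : List WInstr) {k : ℕ} (hk : k ≤ W.length) :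
    S W k + z W k < S W (W.length + 1) := by
  have h1 : S W (k+1) = S W k + (z W k + 1) := by rw [S_succ, e_len]
  have h2 : S W (k+1) ≤ S W (W.length + 1) := S_mono W (by omega)
  omega

lemma Ecore (W : List WInstr) {k : ℕ} (hk : k ≤ W.length) :
    ((S W k : ℤ) - 1) % ((S W (W.length + 1) : ℕ) : ℤ)
      = ((S W (prevI W.length k) + z W (prevI W.length k) : ℕ) : ℤ) := by
  rcases Nat.eq_zero_or_pos k with h0 | h0
  · subst h0
    rw [S_zero]
    simp only [prevI, if_pos rfl]
    have hE := E_lt W (le_refl W.length)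
    have hL : S W (W.length + 1) = S W W.length + z W W.length + 1 := by
      rw [S_succ, e_len]; omega
    rw [show ((0:ℕ):ℤ) - 1 = -1 by norm_num, emod_neg_small (by push_cast; omega) (by norm_num)]
    push_cast; omega
  · have hk1 : k - 1 + 1 = k := by omega
    have hS : S W k = S W (k-1) + z W (k-1) + 1 := by
      conv_lhs => rw [← hk1]
      rw [S_succ, e_len]; omega
    have hlt : S W (k-1) + z W (k-1) < S W (W.length + 1) := E_lt W (by omega)
    simp only [prevI, if_neg (by omega : ¬ k = 0)]
    rw [show ((S W k : ℕ) : ℤ) - 1 = ((S W (k-1) + z W (k-1) : ℕ) : ℤ) by push_cast; omega]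
    exact emod_small (by positivity) (by push_cast; omega)

end H11
namespace H11

lemma back (W : List WInstr) (d : ℕ) : ∀ (k : ℕ), k ≤ W.length →
    ∀ (a pC pW : ℤ) (tw : ℤ → Bool), tw pW = true →
    a % ((S W (W.length + 1) : ℕ) : ℤ) = ((S W k + z W k : ℕ) : ℤ) →
    pC % ((W.length : ℤ) + 2) = (d : ℤ) + 1 →
    d + 1 ≤ W.length + 1 →
    ∃ N ≤ (d + 1) * (S W (W.length + 1) + 2) + 1, ∃ a' pC' : ℤ,
      (hStep (encProg W) W.length)^[N] ⟨3, a, pC, pW, tw⟩ = ⟨0, a', pC', pW, tw⟩ ∧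
      a' % ((S W (W.length + 1) : ℕ) : ℤ)
        = ((S W ((prevI W.length)^[d] k + 1) : ℕ) : ℤ) % ((S W (W.length + 1) : ℕ) : ℤ) ∧
      pC' % ((W.length : ℤ) + 2) = 0 := by
  set n := W.length with hn
  induction d with
  | zero =>
    intro k hk a pC pW tw hw ha hpc _
    have hcc : readC n pC = true := by rw [readC_val n hpc]; simp
    have hp : readP (encProg W) a = true := by
      have := bit_val W hk (le_refl (z W k)) ha; simpa using this
    have hpc2 : (pC - 1) % ((n : ℤ) + 2) = 0 := by
      rw [show pC - 1 = pC + (-1) by ring]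
      exact emod_shift _ hpc (-1) 0 (by norm_num)
    have hcc2 : readC n (pC - 1) = false := by rw [readC_val n hpc2]; simp
    have hp2 : readP (encProg W) (a - 1 + 1) = true := by
      rw [show a - 1 + 1 = a by ring]; exact hp
    refine ⟨3, by omega, a - 1 + 1 + 1, pC - 1, ?_, ?_, hpc2⟩
    · have h3 : ∀ c, (hStep (encProg W) n)^[3] c
          = hStep (encProg W) n (hStep (encProg W) n (hStep (encProg W) n c)) := fun c => rfl
      rw [h3, rule13 hcc hp, rule14 hcc2, rule2 hp2 hw]
    · simp only [Function.iterate_zero_apply]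
      have hE : S W (k + 1) = S W k + z W k + 1 := by rw [S_succ, e_len]; omega
      have hv : ((S W k + z W k : ℕ) : ℤ) + 1 = ((S W (k+1) : ℕ) : ℤ) := by push_cast; omega
      rw [show a - 1 + 1 + 1 = a + 1 by ring]
      exact emod_shift _ ha 1 _ (by rw [hv])
  | succ d ih =>
    intro k hk a pC pW tw hw ha hpc hd
    have hL4 : 4 ≤ S W (n+1) := by
      have h1 : S W (n+1) = S W n + (e W n).length := S_succ W n
      have h2 : e W n = encInstr n n (WInstr.J n) := by
        unfold e iota; rw [if_neg (by omega)]
      have h3 : (e W n).length = 4 := by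
        rw [h2]; simp [encInstr, jumpOffset, Nat.sub_self]
      omega
    have hcc : readC n pC = true := by
      rw [readC_val n hpc]; simp; positivity
    have hp : readP (encProg W) a = true := by
      have := bit_val W hk (le_refl (z W k)) ha; simpa using this
    have hpcc : pC % ((n : ℤ) + 2) = (d : ℤ) + 1 + 1 := by rw [hpc]; push_cast; ring
    have hpc2 : (pC - 1) % ((n : ℤ) + 2) = (d : ℤ) + 1 := by
      rw [show pC - 1 = pC + (-1) by ring]
      refine emod_shift _ hpcc (-1) _ ?_
      rw [show ((d:ℤ) + 1 + 1 + -1) = (d:ℤ) + 1 by ring]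
      exact emod_small (by positivity) (by push_cast; omega)
    have hcc2 : readC n (pC - 1) = true := by
      rw [readC_val n hpc2]; simp; positivity
    -- zeros of instruction k
    have hzeros : ∀ j : ℕ, j < z W k → readP (encProg W) (a - 1 - j) = false := by
      intro j hj
      have hmod : (a - 1 - (j:ℤ)) % ((S W (n+1) : ℕ) : ℤ) = ((S W k + (z W k - 1 - j) : ℕ) : ℤ) := by
        rw [show a - 1 - (j:ℤ) = a + (-(1 + j)) by ring]
        refine emod_shift _ ha _ _ ?_
        rw [show ((S W k + z W k : ℕ) : ℤ) + -(1 + (j:ℤ)) = ((S W k + (z W k - 1 - j) : ℕ) : ℤ) by push_cast; omega]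
        exact emod_small (by positivity) (by
          have hE := E_lt W hk
          rw [← hn] at hE
          push_cast; omega)
      have := bit_val W hk (show z W k - 1 - j ≤ z W k by omega) hmod
      rw [this, if_neg (by omega)]
    have hrun := run3_zeros (P := encProg W) (n := n) (z W k) (a - 1) (pC - 1) pW tw hcc2 hzeros
    -- after the scan we are at the '1' of instruction (prevI n k)
    have ha2 : (a - 1 - (z W k : ℤ)) % ((S W (n+1) : ℕ) : ℤ)
        = ((S W (prevI n k) + z W (prevI n k) : ℕ) : ℤ) := by
      rw [show a - 1 - ((z W k : ℕ) : ℤ) = a + (-(1 + (z W k : ℕ) : ℤ)) by push_cast; ring]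
      refine emod_shift _ ha _ _ ?_
      rw [show ((S W k + z W k : ℕ) : ℤ) + -(1 + ((z W k : ℕ) : ℤ)) = ((S W k : ℕ) : ℤ) - 1 by push_cast; ring]
      exact Ecore W hk
    obtain ⟨N, hN, a', pC', hiter, ha', hpc'⟩ :=
      ih (prevI n k) (prevI_le hk) (a - 1 - z W k) (pC - 1) pW tw hw ha2 hpc2 (by omega)
    refine ⟨N + (z W k + 1), ?_, a', pC', ?_, ?_, hpc'⟩
    · have hzlt : z W k + 1 ≤ S W (n+1) := by
        have h1 : S W (k+1) = S W k + (z W k + 1) := by rw [S_succ, e_len]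
        have h2 : S W (k+1) ≤ S W (n+1) := S_mono W (by omega)
        omega
      calc N + (z W k + 1) ≤ ((d+1) * (S W (n+1) + 2) + 1) + (S W (n+1)) := by omega
        _ ≤ (d + 1 + 1) * (S W (n+1) + 2) + 1 := by ring_nf; omega
    · rw [Function.iterate_add_apply, Function.iterate_succ_apply,
        rule13 hcc hp, hrun, hiter]
    · rw [ha', Function.iterate_succ_apply]

end H11
namespace H11

lemma setup (W : List WInstr) {ip : ℕ} {I : WInstr} (hI : W[ip]? = some I) :
    ip < W.length ∧ e W ip = encInstr W.length ip I := by
  have hk : ip < W.length := by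
    by_contra h
    rw [List.getElem?_eq_none (by omega)] at hI; cases hI
  refine ⟨hk, ?_⟩
  unfold e iota
  rw [if_pos hk, List.getD_eq_getElem?_getD, hI]
  rfl

lemma S_lt_L (W : List WInstr) {k : ℕ} (hk : k ≤ W.length) :
    S W k < S W (W.length + 1) := by
  have h1 := S_mono W hk
  have h2 := S_succ W W.length
  have h3 := e_len W W.length
  omega

lemma sim_M (W : List WInstr) (wc : WCfg) (hc : HCfg) (hI : W[wc.ip]? = some WInstr.M)
    (h : HEnc W wc hc) :
    HEnc W (wStep W wc) ((hStep (encProg W) W.length)^[1] hc) := by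
  obtain ⟨hk, he⟩ := setup W hI
  obtain ⟨st, a, pC, pW, tw⟩ := hc
  obtain ⟨hst, hpP, hpC, hpW, htw⟩ := h
  dsimp only at hst hpP hpC hpW htw
  subst hst hpW htw
  rw [lengthP, pStart_eq W (le_of_lt hk)] at hpP
  have hz : z W wc.ip = 0 := by rw [z, he]; rfl
  have ha : a % ((S W (W.length+1) : ℕ):ℤ) = ((S W wc.ip + 0 : ℕ):ℤ) := by simpa using hpP
  have hp : readP (encProg W) a = true := by
    rw [bit_val W (le_of_lt hk) (by omega) ha]
    simp [hz]
  have hS1 : S W (wc.ip + 1) = S W wc.ip + 1 := by rw [S_succ, e_len, hz]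
  have hpP' : (a + 1) % ((encProg W).length : ℤ) = ((S W (wc.ip + 1) : ℕ) : ℤ) := by
    rw [lengthP]
    refine emod_shift _ hpP 1 _ ?_
    rw [show ((S W wc.ip:ℕ):ℤ) + 1 = ((S W (wc.ip+1) : ℕ):ℤ) by push_cast [hS1]; ring]
    exact emod_small (by positivity) (by exact_mod_cast S_lt_L W (by omega))
  have hwq : wStep W wc = ⟨wc.ip+1, wc.pos, Function.update wc.tape wc.pos true⟩ := by
    unfold wStep; rw [hI]
  rw [Function.iterate_one, hwq]
  cases hwv : wc.tape wc.pos with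
  | true =>
    rw [rule2 hp hwv]
    refine ⟨rfl, ?_, by simpa using hpC, rfl, ?_⟩
    · dsimp only
      rw [pStart_eq W (by omega)]
      exact hpP'
    · dsimp only
      conv_rhs => rw [← hwv]
      exact (Function.update_eq_self _ _).symm
  | false =>
    rw [rule1 hp hwv]
    exact ⟨rfl, by dsimp only; rw [pStart_eq W (by omega)]; exact hpP', by simpa using hpC, rfl, rfl⟩

end H11
namespace H11

lemma sim_R (W : List WInstr) (wc : WCfg) (hc : HCfg) (hI : W[wc.ip]? = some WInstr.R)
    (h : HEnc W wc hc) :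
    HEnc W (wStep W wc) ((hStep (encProg W) W.length)^[2] hc) := by
  obtain ⟨hk, he⟩ := setup W hI
  obtain ⟨st, a, pC, pW, tw⟩ := hc
  obtain ⟨hst, hpP, hpC, hpW, htw⟩ := h
  dsimp only at hst hpP hpC hpW htw
  subst hst hpW htw
  rw [lengthP, pStart_eq W (le_of_lt hk)] at hpP
  have hz : z W wc.ip = 1 := by rw [z, he]; rfl
  have hEl := E_lt W (le_of_lt hk)
  have ha0 : a % ((S W (W.length+1) : ℕ):ℤ) = ((S W wc.ip + 0 : ℕ):ℤ) := by simpa using hpP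
  have ha1 : (a + 1) % ((S W (W.length+1) : ℕ):ℤ) = ((S W wc.ip + 1 : ℕ):ℤ) := by
    refine emod_shift _ hpP 1 _ ?_
    rw [show ((S W wc.ip:ℕ):ℤ) + 1 = ((S W wc.ip + 1 : ℕ):ℤ) by push_cast; ring]
    exact emod_small (by positivity) (by push_cast; omega)
  have hp0 : readP (encProg W) a = false := by
    rw [bit_val W (le_of_lt hk) (by omega) ha0]; simp [hz]
  have hp1 : readP (encProg W) (a + 1) = true := by
    rw [bit_val W (le_of_lt hk) (by omega) ha1]; simp [hz]
  have hcc : readC W.length pC = false := by rw [readC_val W.length hpC]; simp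
  have hS1 : S W (wc.ip + 1) = S W wc.ip + 2 := by rw [S_succ, e_len, hz]
  have hpP' : (a + 1 + 1) % ((encProg W).length : ℤ) = ((S W (wc.ip + 1) : ℕ) : ℤ) := by
    rw [lengthP]
    refine emod_shift _ ha1 1 _ ?_
    rw [show ((S W wc.ip + 1 :ℕ):ℤ) + 1 = ((S W (wc.ip+1) : ℕ):ℤ) by push_cast [hS1]; ring]
    exact emod_small (by positivity) (by exact_mod_cast S_lt_L W (by omega))
  have hwq : wStep W wc = ⟨wc.ip+1, wc.pos + 1, wc.tape⟩ := by
    unfold wStep; rw [hI]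
  have h2 : ∀ c, (hStep (encProg W) W.length)^[2] c
      = hStep (encProg W) W.length (hStep (encProg W) W.length c) := fun _ => rfl
  rw [h2, hwq, rule3 hp0, rule4 hcc hp1]
  exact ⟨rfl, by dsimp only; rw [pStart_eq W (by omega)]; exact hpP',
    by simpa using hpC, rfl, rfl⟩

lemma sim_L (W : List WInstr) (wc : WCfg) (hc : HCfg) (hI : W[wc.ip]? = some WInstr.L)
    (h : HEnc W wc hc) :
    HEnc W (wStep W wc) ((hStep (encProg W) W.length)^[3] hc) := by
  obtain ⟨hk, he⟩ := setup W hI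
  obtain ⟨st, a, pC, pW, tw⟩ := hc
  obtain ⟨hst, hpP, hpC, hpW, htw⟩ := h
  dsimp only at hst hpP hpC hpW htw
  subst hst hpW htw
  rw [lengthP, pStart_eq W (le_of_lt hk)] at hpP
  have hz : z W wc.ip = 2 := by rw [z, he]; rfl
  have hEl := E_lt W (le_of_lt hk)
  have ha0 : a % ((S W (W.length+1) : ℕ):ℤ) = ((S W wc.ip + 0 : ℕ):ℤ) := by simpa using hpP
  have ha1 : (a + 1) % ((S W (W.length+1) : ℕ):ℤ) = ((S W wc.ip + 1 : ℕ):ℤ) := by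
    refine emod_shift _ hpP 1 _ ?_
    rw [show ((S W wc.ip:ℕ):ℤ) + 1 = ((S W wc.ip + 1 : ℕ):ℤ) by push_cast; ring]
    exact emod_small (by positivity) (by push_cast; omega)
  have ha2 : (a + 1 + 1) % ((S W (W.length+1) : ℕ):ℤ) = ((S W wc.ip + 2 : ℕ):ℤ) := by
    refine emod_shift _ ha1 1 _ ?_
    rw [show ((S W wc.ip + 1:ℕ):ℤ) + 1 = ((S W wc.ip + 2 : ℕ):ℤ) by push_cast; ring]
    exact emod_small (by positivity) (by push_cast; omega)
  have hp0 : readP (encProg W) a = false := by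
    rw [bit_val W (le_of_lt hk) (by omega) ha0]; simp [hz]
  have hp1 : readP (encProg W) (a + 1) = false := by
    rw [bit_val W (le_of_lt hk) (by omega) ha1]; simp [hz]
  have hp2 : readP (encProg W) (a + 1 + 1) = true := by
    rw [bit_val W (le_of_lt hk) (by omega) ha2]; simp [hz]
  have hcc : readC W.length pC = false := by rw [readC_val W.length hpC]; simp
  have hpC1 : (pC + 1) % ((W.length : ℤ) + 2) = 1 := by
    refine emod_shift _ hpC 1 _ ?_
    exact emod_small (by norm_num) (by push_cast; omega)
  have hcc1 : readC W.length (pC + 1) = true := by rw [readC_val W.length hpC1]; simp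
  have hS1 : S W (wc.ip + 1) = S W wc.ip + 3 := by rw [S_succ, e_len, hz]
  have hpP' : (a + 1 + 1 + 1) % ((encProg W).length : ℤ) = ((S W (wc.ip + 1) : ℕ) : ℤ) := by
    rw [lengthP]
    refine emod_shift _ ha2 1 _ ?_
    rw [show ((S W wc.ip + 2 :ℕ):ℤ) + 1 = ((S W (wc.ip+1) : ℕ):ℤ) by push_cast [hS1]; ring]
    exact emod_small (by positivity) (by exact_mod_cast S_lt_L W (by omega))
  have hwq : wStep W wc = ⟨wc.ip+1, wc.pos - 1, wc.tape⟩ := by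
    unfold wStep; rw [hI]
  have h3 : ∀ c, (hStep (encProg W) W.length)^[3] c
      = hStep (encProg W) W.length (hStep (encProg W) W.length
        (hStep (encProg W) W.length c)) := fun _ => rfl
  rw [h3, hwq, rule3 hp0, rule5 hcc hp1, rule6 hcc1 hp2]
  refine ⟨rfl, by dsimp only; rw [pStart_eq W (by omega)]; exact hpP', ?_, rfl, rfl⟩
  dsimp only
  rw [show pC + 1 - 1 = pC by ring]
  exact hpC

end H11
namespace H11

lemma sim_J (W : List WInstr) (x : ℕ) (hx : x ≤ W.length) (wc : WCfg) (hc : HCfg)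
    (hI : W[wc.ip]? = some (WInstr.J x)) (h : HEnc W wc hc) :
    ∃ s ≤ (W.length + 1) * (S W (W.length + 1) + 2) + 2 * W.length + 8,
      HEnc W (wStep W wc) ((hStep (encProg W) W.length)^[s] hc) := by
  obtain ⟨hk, he⟩ := setup W hI
  obtain ⟨st, a, pC, pW, tw⟩ := hc
  obtain ⟨hst, hpP, hpC, hpW, htw⟩ := h
  dsimp only at hst hpP hpC hpW htw
  subst hst
  rw [lengthP, pStart_eq W (le_of_lt hk)] at hpP
  set y := jumpOffset W.length wc.ip x with hy_def
  have hy : y ≤ W.length := by rw [hy_def]; unfold jumpOffset; split <;> omega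
  have hz : z W wc.ip = 3 + y := by
    rw [z, he]; simp [encInstr, hy_def]
  have hEl := E_lt W (le_of_lt hk)
  have haj : ∀ j : ℕ, j ≤ 3 + y → (a + (j:ℤ)) % ((S W (W.length+1) : ℕ):ℤ)
      = ((S W wc.ip + j : ℕ) : ℤ) := by
    intro j hj
    refine emod_shift _ hpP (j:ℤ) _ ?_
    rw [show ((S W wc.ip:ℕ):ℤ) + (j:ℤ) = ((S W wc.ip + j : ℕ):ℤ) by push_cast; ring]
    exact emod_small (by positivity) (by push_cast; omega)
  have hpj : ∀ j : ℕ, j < 3 + y → readP (encProg W) (a + (j:ℤ)) = false := by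
    intro j hj
    rw [bit_val W (le_of_lt hk) (by omega) (haj j (by omega))]
    simp [hz]; omega
  have hp_one : readP (encProg W) (a + ((3+y : ℕ):ℤ)) = true := by
    rw [bit_val W (le_of_lt hk) (by rw [hz]) (haj (3+y) (le_refl _))]
    simp [hz]
  have hcc0 : readC W.length pC = false := by rw [readC_val W.length hpC]; simp
  have hpC1 : (pC + 1) % ((W.length : ℤ) + 2) = 1 := by
    refine emod_shift _ hpC 1 _ ?_
    exact emod_small (by norm_num) (by push_cast; omega)
  have hcc1 : readC W.length (pC + 1) = true := by rw [readC_val W.length hpC1]; simp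
  have h3u : ∀ c, (hStep (encProg W) W.length)^[3] c
      = hStep (encProg W) W.length (hStep (encProg W) W.length
        (hStep (encProg W) W.length c)) := fun _ => rfl
  have hp0 : readP (encProg W) a = false := by
    have := hpj 0 (by omega); simpa using this
  have hp1 : readP (encProg W) (a + 1) = false := by
    have := hpj 1 (by omega); simpa using this
  have hp2 : readP (encProg W) (a + 1 + 1) = false := by
    have := hpj 2 (by omega)
    rw [show a + 1 + 1 = a + (2:ℤ) by ring]
    simpa using this
  have hstep3 : (hStep (encProg W) W.length)^[3] ⟨0,a,pC,pW,tw⟩ = ⟨2, a + 3, pC, pW, tw⟩ := by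
    rw [h3u, rule3 hp0, rule5 hcc0 hp1, rule7 hcc1 hp2]
    congr 1 <;> ring
  have hzeros2 : ∀ j : ℕ, j < y → readP (encProg W) (a + 3 + (j:ℤ)) = false := by
    intro j hj
    have := hpj (3 + j) (by omega)
    rw [show a + 3 + (j:ℤ) = a + ((3+j : ℕ):ℤ) by push_cast; ring]
    exact this
  cases hwv : wc.tape wc.pos with
  | false =>
    -- jump not taken
    have hw' : tw pW = false := by rw [htw, hpW, hwv]
    have hrun2 := run2_false (P := encProg W) (n := W.length) y (a+3) pC pW tw hw' hzeros2
    have hp_one' : readP (encProg W) (a + 3 + (y:ℤ)) = true := by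
      rw [show a + 3 + (y:ℤ) = a + ((3+y : ℕ):ℤ) by push_cast; ring]
      exact hp_one
    have hr9 := rule9 (P := encProg W) (n := W.length)
      (a := a + 3 + (y:ℤ)) (pC := pC) hw' hp_one'
    refine ⟨1 + (y + 3), by omega, ?_⟩
    have e1 : (hStep (encProg W) W.length)^[y + 3] ⟨0,a,pC,pW,tw⟩
        = ⟨2, a + 3 + (y:ℤ), pC, pW, tw⟩ := by
      rw [Function.iterate_add_apply, hstep3, hrun2]
    have hall : (hStep (encProg W) W.length)^[1 + (y + 3)] ⟨0,a,pC,pW,tw⟩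
        = ⟨0, a + 3 + (y:ℤ) + 1, pC, pW, tw⟩ := by
      rw [Function.iterate_add_apply, e1, Function.iterate_one, hr9]
    rw [hall]
    have hwq : wStep W wc = ⟨wc.ip + 1, wc.pos, wc.tape⟩ := by
      unfold wStep; rw [hI]; simp [hwv]
    rw [hwq]
    have hS1 : S W (wc.ip + 1) = S W wc.ip + (4 + y) := by rw [S_succ, e_len, hz]; omega
    refine ⟨rfl, ?_, by simpa using hpC, hpW, htw⟩
    dsimp only
    rw [lengthP, pStart_eq W (by omega)]
    rw [show a + 3 + (y:ℤ) + 1 = a + ((4 + y : ℕ):ℤ) by push_cast; ring]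
    refine emod_shift _ hpP _ _ ?_
    rw [show ((S W wc.ip:ℕ):ℤ) + ((4+y:ℕ):ℤ) = ((S W (wc.ip+1) : ℕ):ℤ) by push_cast [hS1]; ring]
    exact emod_small (by positivity) (by exact_mod_cast S_lt_L W (by omega))
  | true =>
    -- jump taken
    have hw' : tw pW = true := by rw [htw, hpW, hwv]
    have hrun2 := run2_true (P := encProg W) (n := W.length) y (a+3) pC pW tw hw' hzeros2
    have hp_one' : readP (encProg W) (a + 3 + (y:ℤ)) = true := by
      rw [show a + 3 + (y:ℤ) = a + ((3+y : ℕ):ℤ) by push_cast; ring]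
      exact hp_one
    have hr11 := rule11 (P := encProg W) (n := W.length)
      (a := a + 3 + (y:ℤ)) (pC := pC + (y:ℤ)) hw' hp_one'
    have hpcc : (pC + (y:ℤ) + 1) % ((W.length : ℤ) + 2) = (y:ℤ) + 1 := by
      rw [show pC + (y:ℤ) + 1 = pC + ((y:ℤ)+1) by ring]
      refine emod_shift _ hpC _ _ ?_
      rw [show (0:ℤ) + ((y:ℤ)+1) = (y:ℤ)+1 by ring]
      exact emod_small (by positivity) (by push_cast; omega)
    have hcc' : readC W.length (pC + (y:ℤ) + 1) = true := by
      rw [readC_val W.length hpcc]; simp; positivity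
    have hzeros3 : ∀ j : ℕ, j < 3 + y →
        readP (encProg W) (a + 3 + (y:ℤ) - 1 - (j:ℤ)) = false := by
      intro j hj
      have h1 := hpj (2 + y - j) (by omega)
      rw [show a + 3 + (y:ℤ) - 1 - (j:ℤ) = a + ((2 + y - j : ℕ):ℤ) by
        have : (((2+y-j:ℕ)):ℤ) = 2 + (y:ℤ) - (j:ℤ) := by omega
        rw [this]; ring]
      exact h1
    have hrun3 := run3_zeros (P := encProg W) (n := W.length) (3+y)
      (a + 3 + (y:ℤ) - 1) (pC + (y:ℤ) + 1) pW tw hcc' hzeros3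
    rw [show a + 3 + (y:ℤ) - 1 - ((3+y:ℕ):ℤ) = a - 1 by push_cast; ring] at hrun3
    have ha1 : (a - 1) % ((S W (W.length+1) : ℕ):ℤ)
        = ((S W (prevI W.length wc.ip) + z W (prevI W.length wc.ip) : ℕ) : ℤ) := by
      rw [show a - 1 = a + (-1) by ring]
      refine emod_shift _ hpP _ _ ?_
      rw [show ((S W wc.ip:ℕ):ℤ) + (-1) = ((S W wc.ip:ℕ):ℤ) - 1 by ring]
      exact Ecore W (le_of_lt hk)
    obtain ⟨N, hN, a', pC', hiter, ha', hpc'⟩ :=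
      back W y (prevI W.length wc.ip) (prevI_le (le_of_lt hk)) (a - 1)
        (pC + (y:ℤ) + 1) pW tw hw' ha1 hpcc (by omega)
    refine ⟨N + ((3 + y) + (1 + (y + 3))), by
      have : (y+1) * (S W (W.length+1) + 2) + 1 ≤ (W.length+1) * (S W (W.length+1) + 2) + 1 :=
        by
          have := Nat.mul_le_mul_right (S W (W.length+1) + 2) (show y+1 ≤ W.length+1 by omega)
          omega
      omega, ?_⟩
    have e1 : (hStep (encProg W) W.length)^[y + 3] ⟨0,a,pC,pW,tw⟩
        = ⟨2, a + 3 + (y:ℤ), pC + (y:ℤ), pW, tw⟩ := by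
      rw [Function.iterate_add_apply, hstep3, hrun2]
    have e2 : (hStep (encProg W) W.length)^[1 + (y + 3)] ⟨0,a,pC,pW,tw⟩
        = ⟨3, a + 3 + (y:ℤ) - 1, pC + (y:ℤ) + 1, pW, tw⟩ := by
      rw [Function.iterate_add_apply, e1, Function.iterate_one, hr11]
    have e3 : (hStep (encProg W) W.length)^[(3 + y) + (1 + (y + 3))] ⟨0,a,pC,pW,tw⟩
        = ⟨3, a - 1, pC + (y:ℤ) + 1, pW, tw⟩ := by
      rw [Function.iterate_add_apply, e2, hrun3]
    have hall : (hStep (encProg W) W.length)^[N + ((3 + y) + (1 + (y + 3)))] ⟨0,a,pC,pW,tw⟩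
        = ⟨0, a', pC', pW, tw⟩ := by
      rw [Function.iterate_add_apply, e3, hiter]
    rw [hall]
    have hwq : wStep W wc = ⟨x, wc.pos, wc.tape⟩ := by
      unfold wStep; rw [hI]; simp [hwv]
    rw [hwq]
    refine ⟨rfl, ?_, by simpa using hpc', hpW, htw⟩
    dsimp only
    rw [lengthP]
    rw [← Function.iterate_succ_apply (prevI W.length) y wc.ip] at ha'
    simp only [Nat.succ_eq_add_one] at ha'
    rw [hy_def] at ha'
    rw [prevI_target hk hx] at ha'
    rcases Nat.eq_zero_or_pos x with hx0 | hx0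
    · subst hx0
      rw [if_pos rfl] at ha'
      rw [pStart_eq W (by omega), S_zero]
      rw [ha', Int.emod_self]
      simp
    · rw [if_neg (by omega)] at ha'
      rw [show x - 1 + 1 = x by omega] at ha'
      rw [pStart_eq W hx, ha']
      exact emod_small (by positivity) (by exact_mod_cast S_lt_L W hx)

end H11
namespace H11

def B (W : List WInstr) : ℕ := (W.length + 1) * (S W (W.length + 1) + 2) + 2 * W.length + 8

lemma sim_step (W : List WInstr) (hW : ∀ x, WInstr.J x ∈ W → x ≤ W.length)
    (wc : WCfg) (hc : HCfg) (h : HEnc W wc hc) :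
    ∃ s ≤ B W, HEnc W (wStep W wc) ((hStep (encProg W) W.length)^[s] hc) := by
  cases hI : W[wc.ip]? with
  | none =>
    refine ⟨0, by omega, ?_⟩
    have : wStep W wc = wc := by unfold wStep; rw [hI]
    rw [this, Function.iterate_zero_apply]
    exact h
  | some I =>
    cases I with
    | M => exact ⟨1, by unfold B; omega, sim_M W wc hc hI h⟩
    | R => exact ⟨2, by unfold B; omega, sim_R W wc hc hI h⟩
    | L => exact ⟨3, by unfold B; omega, sim_L W wc hc hI h⟩
    | J x =>
      obtain ⟨s, hs, hh⟩ := sim_J W x (hW x (List.mem_of_getElem? hI)) wc hc hI h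
      exact ⟨s, by unfold B; omega, hh⟩

lemma wStep_ip_le (W : List WInstr) (hW : ∀ x, WInstr.J x ∈ W → x ≤ W.length)
    (wc : WCfg) (h : wc.ip ≤ W.length) : (wStep W wc).ip ≤ W.length := by
  unfold wStep
  cases hI : W[wc.ip]? with
  | none => exact h
  | some I =>
    have hk : wc.ip < W.length := by
      by_contra hcon
      rw [List.getElem?_eq_none (by omega)] at hI; cases hI
    cases I with
    | M => dsimp only; omega
    | R => dsimp only; omega
    | L => dsimp only; omega
    | J x =>
      dsimp only
      split
      · exact hW x (List.mem_of_getElem? hI)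
      · dsimp only; omega

lemma sim_run (W : List WInstr) (hW : ∀ x, WInstr.J x ∈ W → x ≤ W.length) :
    ∀ (t : ℕ) (wc : WCfg) (hc : HCfg), wc.ip ≤ W.length → HEnc W wc hc →
    ∃ s ≤ B W * t, HEnc W ((wStep W)^[t] wc) ((hStep (encProg W) W.length)^[s] hc) := by
  intro t
  induction t with
  | zero => intro wc hc _ h; exact ⟨0, by omega, h⟩
  | succ t ih =>
    intro wc hc hip h
    obtain ⟨s1, hs1, h1⟩ := sim_step W hW wc hc h
    obtain ⟨s2, hs2, h2⟩ := ih (wStep W wc) ((hStep (encProg W) W.length)^[s1] hc)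
      (wStep_ip_le W hW wc hip) h1
    refine ⟨s2 + s1, by
      have : B W * (t + 1) = B W * t + B W := by ring
      omega, ?_⟩
    rw [Function.iterate_succ_apply, Function.iterate_add_apply]
    exact h2

end H11

/-- Hasenjaeger's 4-state machine simulates a single Wang B machine instruction `M` in
exactly 1 step, `R` in exactly 2 steps, `L` in exactly 3 steps, and `J(x)` in
`O(n²)` steps where `n` is the number of instructions of the simulated Wang B
machine; hence, for a fixed Wang B machine running in time `t`, it simulates the whole
computation in `O(t)` steps. -/
theorem stmt11 (W : List WInstr) (hW : ∀ x, WInstr.J x ∈ W → x ≤ W.length) :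
    (∀ (wc : WCfg) (hc : HCfg), W[wc.ip]? = some WInstr.M → HEnc W wc hc →
      HEnc W (wStep W wc) ((hStep (encProg W) W.length)^[1] hc)) ∧
    (∀ (wc : WCfg) (hc : HCfg), W[wc.ip]? = some WInstr.R → HEnc W wc hc →
      HEnc W (wStep W wc) ((hStep (encProg W) W.length)^[2] hc)) ∧
    (∀ (wc : WCfg) (hc : HCfg), W[wc.ip]? = some WInstr.L → HEnc W wc hc →
      HEnc W (wStep W wc) ((hStep (encProg W) W.length)^[3] hc)) ∧
    (∃ c : ℕ, ∀ (x : ℕ) (wc : WCfg) (hc : HCfg),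
      W[wc.ip]? = some (WInstr.J x) → HEnc W wc hc →
      ∃ s ≤ c * (W.length + 2) ^ 2,
        HEnc W (wStep W wc) ((hStep (encProg W) W.length)^[s] hc)) ∧
    (∃ c : ℕ, ∀ (wc : WCfg) (hc : HCfg) (t : ℕ), wc.ip ≤ W.length → HEnc W wc hc →
      ∃ s ≤ c * t + c,
        HEnc W ((wStep W)^[t] wc) ((hStep (encProg W) W.length)^[s] hc)) := by
  refine ⟨fun wc hc hI h => H11.sim_M W wc hc hI h,
    fun wc hc hI h => H11.sim_R W wc hc hI h,
    fun wc hc hI h => H11.sim_L W wc hc hI h,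
    ⟨H11.B W, fun x wc hc hI h => ?_⟩,
    ⟨H11.B W, fun wc hc t hip h => ?_⟩⟩
  · obtain ⟨s, hs, hh⟩ := H11.sim_J W x (hW x (List.mem_of_getElem? hI)) wc hc hI h
    refine ⟨s, ?_, hh⟩
    calc s ≤ H11.B W := by unfold H11.B; omega
      _ = H11.B W * 1 := (Nat.mul_one _).symm
      _ ≤ H11.B W * (W.length + 2) ^ 2 :=
          Nat.mul_le_mul_left _ (Nat.one_le_pow 2 (W.length + 2) (by omega))
  · obtain ⟨s, hs, hh⟩ := H11.sim_run W hW t wc hc hip h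
    exact ⟨s, by omega, hh⟩
end

section
/- When Hasenjaeger's machine H reaches the configuration encoding the halting of the simulated Wang B machine — state q1, program tape head on the first bit of the final encoded instruction ⟨J(n)⟩ = 0001 (at position n in the encoded program), counter head on the 0 of C, and work-tape head reading 1 — then after exactly 10 steps H returns to the same configuration; hence H enters an infinite loop with unchanged tape contents. -/

lemma encInstr_ends (n k : ℕ) (i : WInstr) : ∃ l, encInstr n k i = l ++ [true] := by
  cases i with
  | M => exact ⟨[], rfl⟩
  | R => exact ⟨[false], rfl⟩
  | L => exact ⟨[false, false], rfl⟩
  | J x => exact ⟨_, rfl⟩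

lemma encProg_decomp (W : List WInstr) (hW : W ≠ []) :
    ∃ l : List Bool, encProg W = (l ++ [true]) ++ [false, false, false, true] ∧
      pStart W W.length = l.length + 1 := by
  have hn : W.length - 1 + 1 = W.length := Nat.succ_pred_eq_of_pos (List.length_pos_iff.mpr hW)
  have hr : List.range W.length = List.range (W.length - 1) ++ [W.length - 1] := by
    conv_lhs => rw [← hn, List.range_succ]
  have hjo : jumpOffset W.length W.length W.length = 0 := by
    simp [jumpOffset]
  have hend : encInstr W.length W.length (WInstr.J W.length) = [false, false, false, true] := by
    rw [encInstr, hjo]; rfl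
  obtain ⟨l0, hl0⟩ := encInstr_ends W.length (W.length - 1) (W.getD (W.length - 1) WInstr.M)
  refine ⟨((List.range (W.length - 1)).map
      (fun k => encInstr W.length k (W.getD k WInstr.M))).flatten ++ l0, ?_, ?_⟩
  · rw [encProg, hend, hr]
    simp only [List.map_append, List.map_cons, List.map_nil, List.flatten_append,
      List.flatten_cons, List.flatten_nil, List.append_nil]
    rw [hl0]
    simp [List.append_assoc]
  · rw [pStart, hr]
    simp only [List.map_append, List.map_cons, List.map_nil, List.flatten_append,
      List.flatten_cons, List.flatten_nil, List.append_nil]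
    rw [hl0]
    simp
    omega

lemma emod_shift (a L s t : ℤ) (h : a % L = s) (h0 : 0 ≤ s + t) (h1 : s + t < L) :
    (a + t) % L = s + t := by
  have hL : 0 < L := lt_of_le_of_lt h0 h1
  have hs0 : 0 ≤ s := h ▸ Int.emod_nonneg a (by omega)
  have hsL : s < L := h ▸ Int.emod_lt_of_pos a hL
  have key : (a + t) % L = (s + t) % L := by
    conv_lhs => rw [Int.add_emod, h, ← Int.emod_eq_of_lt hs0 hsL, ← Int.add_emod]
  rw [key, Int.emod_eq_of_lt h0 h1]

lemma readP_key (P : List Bool) (z : ℤ) (k : ℕ) (h : z % (P.length : ℤ) = (k : ℤ)) :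
    readP P z = P.getD k false := by
  rw [readP, h]; simp

lemma loop10 (l P : List Bool) (n : ℕ) (pP pC pW : ℤ) (tp : ℤ → Bool)
    (hP : P = (l ++ [true]) ++ [false, false, false, true])
    (h2 : pP % (P.length : ℤ) = ((l.length + 1 : ℕ) : ℤ))
    (h3 : pC % ((n : ℤ) + 2) = 0) (h4 : tp pW = true) :
    (hStep P n)^[10] ⟨0, pP, pC, pW, tp⟩ = ⟨0, pP, pC, pW, tp⟩ := by
  set m : ℕ := l.length with hm
  have hlen : (P.length : ℤ) = (m : ℤ) + 5 := by
    simp only [hP]; simp; omega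
  -- bit values
  have bm1 : P.getD m false = true := by
    rw [hP, List.getD_append _ _ _ _ (by simp; omega),
      List.getD_append_right _ _ _ _ (le_refl _)]
    simp
  have bi : ∀ i : ℕ, i < 4 → P.getD (m + 1 + i) false = [false, false, false, true].getD i false := by
    intro i hi
    have hidx : m + 1 + i - (l ++ [true]).length = i := by simp only [List.length_append, List.length_singleton]; omega
    rw [hP, List.getD_append_right _ _ _ _ (by simp only [List.length_append, List.length_singleton]; omega), hidx]
  have b0 : P.getD (m + 1) false = false := by have := bi 0 (by norm_num); simpa using this
  have b1 : P.getD (m + 2) false = false := by have := bi 1 (by norm_num); simpa using this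
  have b2 : P.getD (m + 3) false = false := by have := bi 2 (by norm_num); simpa using this
  have b3 : P.getD (m + 4) false = true := by
    have := bi 3 (by norm_num)
    rw [show m + 1 + 3 = m + 4 by ring] at this
    simpa using this
  -- program tape reads
  have hmod : ∀ t : ℤ, 0 ≤ ((m : ℤ) + 1) + t → ((m : ℤ) + 1) + t < (m : ℤ) + 5 →
      (pP + t) % (P.length : ℤ) = ((m : ℤ) + 1) + t := by
    intro t ht0 ht1
    exact emod_shift pP _ _ t (by push_cast at h2 ⊢; exact h2) ht0 (by rw [hlen]; exact ht1)
  have r0 : readP P pP = false := by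
    rw [readP_key P pP (m + 1) (by push_cast; exact h2), b0]
  have r1 : readP P (pP + 1) = false := by
    rw [readP_key P (pP + 1) (m + 2) (by push_cast; have := hmod 1 (by positivity) (by omega); omega), b1]
  have r2 : readP P (pP + 2) = false := by
    rw [readP_key P (pP + 2) (m + 3) (by push_cast; have := hmod 2 (by positivity) (by omega); omega), b2]
  have r3 : readP P (pP + 3) = true := by
    rw [readP_key P (pP + 3) (m + 4) (by push_cast; have := hmod 3 (by positivity) (by omega); omega), b3]
  have rm1 : readP P (pP - 1) = true := by
    rw [show pP - (1:ℤ) = pP + (-1) by ring, readP_key P (pP + (-1)) m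
      (by have := hmod (-1) (by push_cast; omega) (by omega)
          push_cast at this ⊢; omega), bm1]
  -- counter tape reads
  have c0 : readC n pC = false := by simp [readC, h3]
  have c1 : readC n (pC + 1) = true := by
    have : (pC + 1) % ((n : ℤ) + 2) = 1 :=
      emod_shift pC _ 0 1 h3 (by norm_num) (by push_cast; omega)
    simp [readC, this]
  -- the ten steps
  have e1 : hStep P n ⟨0, pP, pC, pW, tp⟩ = ⟨1, pP + 1, pC, pW, tp⟩ := by
    simp [hStep, r0]
  have e2 : hStep P n ⟨1, pP + 1, pC, pW, tp⟩ = ⟨1, pP + 2, pC + 1, pW, tp⟩ := by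
    simp [hStep, r1, c0] <;> omega
  have e3 : hStep P n ⟨1, pP + 2, pC + 1, pW, tp⟩ = ⟨2, pP + 3, pC, pW, tp⟩ := by
    simp [hStep, r2, c1] <;> omega
  have e4 : hStep P n ⟨2, pP + 3, pC, pW, tp⟩ = ⟨3, pP + 2, pC + 1, pW, tp⟩ := by
    simp [hStep, r3, h4] <;> omega
  have e5 : hStep P n ⟨3, pP + 2, pC + 1, pW, tp⟩ = ⟨3, pP + 1, pC + 1, pW, tp⟩ := by
    simp [hStep, r2, c1] <;> omega
  have e6 : hStep P n ⟨3, pP + 1, pC + 1, pW, tp⟩ = ⟨3, pP, pC + 1, pW, tp⟩ := by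
    simp [hStep, r1, c1] <;> omega
  have e7 : hStep P n ⟨3, pP, pC + 1, pW, tp⟩ = ⟨3, pP - 1, pC + 1, pW, tp⟩ := by
    simp [hStep, r0, c1] <;> omega
  have e8 : hStep P n ⟨3, pP - 1, pC + 1, pW, tp⟩ = ⟨3, pP - 2, pC, pW, tp⟩ := by
    simp [hStep, rm1, c1] <;> omega
  have e9 : hStep P n ⟨3, pP - 2, pC, pW, tp⟩ = ⟨0, pP - 1, pC, pW, tp⟩ := by
    simp [hStep, c0] <;> omega
  have e10 : hStep P n ⟨0, pP - 1, pC, pW, tp⟩ = ⟨0, pP, pC, pW, tp⟩ := by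
    simp [hStep, rm1, h4] <;> omega
  simp only [Function.iterate_succ, Function.iterate_zero, Function.comp_apply, id_eq]
  rw [e1, e2, e3, e4, e5, e6, e7, e8, e9, e10]

/-- When Hasenjaeger's machine reaches the configuration encoding the halting of the
simulated Wang B machine — state `q1`, `P`-head on the first bit of the final encoded
instruction `⟨J(n)⟩ = 0001`, `C`-head on the unique `0`, work-tape head reading
`1` — then after exactly 10 steps it returns to the same configuration; hence it loops
forever with unchanged tape contents. -/
theorem stmt12 (W : List WInstr) (hW : W ≠ [])
    (hc : HCfg) (h1 : hc.state = 0)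
    (h2 : hc.pP % ((encProg W).length : ℤ) = (pStart W W.length : ℤ))
    (h3 : hc.pC % ((W.length : ℤ) + 2) = 0)
    (h4 : hc.tapeW hc.pW = true) :
    (hStep (encProg W) W.length)^[10] hc = hc ∧
    ∀ j : ℕ, (hStep (encProg W) W.length)^[10 * j] hc = hc := by
  obtain ⟨st, pP, pC, pW, tp⟩ := hc
  simp only at h1 h2 h3 h4
  subst h1
  obtain ⟨l, hdec, hps⟩ := encProg_decomp W hW
  rw [hps] at h2
  have key : (hStep (encProg W) W.length)^[10] (⟨0, pP, pC, pW, tp⟩ : HCfg) =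
      ⟨0, pP, pC, pW, tp⟩ :=
    loop10 l (encProg W) W.length pP pC pW tp hdec (by exact_mod_cast h2) h3 h4
  refine ⟨key, fun j => ?_⟩
  rw [Function.iterate_mul]
  exact Function.iterate_fixed key j
end

section
/- In the modification of the Wang B machine program to satisfy Hooper's restrictions, replacing every instruction I_k = M by the sequence J(k+4), R, L, M, R, L preserves the machine's input/output behaviour: on any tape, the modified sequence has the same effect on the tape and relative head position as the single M instruction (setting the current cell to 1 and leaving the head in place), and control exits at the instruction following the sequence. -/
/-- Hooper's restriction 3: replacing an instruction `I_k = M` by the sequence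
`J(k+4), R, L, M, R, L` preserves behaviour: from instruction pointer `k`, in at most
6 steps the machine reaches instruction pointer `k + 6` with the current cell set to
1 and the head where it started — exactly the effect of a single `M` followed by
moving control to the next instruction. -/
theorem stmt13 (P : List WInstr) (k : ℕ)
    (h0 : P[k]? = some (WInstr.J (k + 4)))
    (h1 : P[k + 1]? = some WInstr.R)
    (h2 : P[k + 2]? = some WInstr.L)
    (h3 : P[k + 3]? = some WInstr.M)
    (h4 : P[k + 4]? = some WInstr.R)
    (h5 : P[k + 5]? = some WInstr.L)
    (c : WCfg) (hip : c.ip = k) :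
    ∃ s ≤ 6, (wStep P)^[s] c =
      ⟨k + 6, c.pos, Function.update c.tape c.pos true⟩ := by

  obtain ⟨ip, pos, tape⟩ := c
  subst hip
  by_cases ht : tape pos = true
  · refine ⟨3, by norm_num, ?_⟩
    have hupd : Function.update tape pos true = tape := by
      funext x
      by_cases hx : x = pos
      · subst hx; simp [ht]
      · simp [Function.update, hx]
    simp only [Function.iterate_succ, Function.iterate_zero, Function.comp_apply, id]
    rw [show (wStep P ⟨ip, pos, tape⟩) = ⟨ip+4, pos, tape⟩ by
      simp [wStep, h0, ht]]
    rw [show (wStep P ⟨ip+4, pos, tape⟩) = ⟨ip+5, pos+1, tape⟩ by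
      simp [wStep, h4]]
    rw [show (wStep P ⟨ip+5, pos+1, tape⟩) = ⟨ip+6, pos, tape⟩ by
      simp [wStep, h5]]
    rw [hupd]
  · refine ⟨6, le_refl _, ?_⟩
    simp only [Function.iterate_succ, Function.iterate_zero, Function.comp_apply, id]
    rw [show (wStep P ⟨ip, pos, tape⟩) = ⟨ip+1, pos, tape⟩ by
      simp [wStep, h0, ht]]
    rw [show (wStep P ⟨ip+1, pos, tape⟩) = ⟨ip+2, pos+1, tape⟩ by
      simp [wStep, h1]]
    rw [show (wStep P ⟨ip+2, pos+1, tape⟩) = ⟨ip+3, pos, tape⟩ by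
      simp [wStep, h2]]
    rw [show (wStep P ⟨ip+3, pos, tape⟩) = ⟨ip+4, pos, Function.update tape pos true⟩ by
      simp [wStep, h3]]
    rw [show (wStep P ⟨ip+4, pos, Function.update tape pos true⟩) = ⟨ip+5, pos+1, Function.update tape pos true⟩ by
      simp [wStep, h4]]
    rw [show (wStep P ⟨ip+5, pos+1, Function.update tape pos true⟩) = ⟨ip+6, pos, Function.update tape pos true⟩ by
      simp [wStep, h5]]
end
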